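/- arXiv:2502.10510 — 5 statements merged into one kernel-verified Lean document; each statement's English description precedes it below -/
import Mathlib

section
/- Let X be a measurable space, P a nonempty finite index set, and for each p ∈ P let μ_p be a probability measure on X × ℝ such that all μ_p have the same marginal ρ on X and ∫ y² dμ_p(x,y) < ∞. For λ ∈ Δ^P set μ_λ = Σ_{p∈P} λ_p μ_p. For each p let f_p : X → ℝ be measurable with ∫ f_p² dρ < ∞ minimizing f ↦ ∫ (f(x) − y)² dμ_p(x,y) over all measurable f : X → ℝ. Let t be a probability measure on X × ℝ whose marginal on X is absolutely continuous with respect to ρ, with ∫ y² dt < ∞ and ∫ f_p² d(t-marginal) < ∞ for all p. Then for any family (g_λ)_{λ∈Δ^P} of measurable functions g_λ : X → ℝ with ∫ g_λ² dρ < ∞, each minimizing f ↦ ∫ (f(x) − y)² dμ_λ(x,y) over all measurable f, one has ∫ (g_λ(x) − y)² dt(x,y) = ∫ (Σ_{p∈P} λ_p f_p(x) − y)² dt(x,y) for every λ ∈ Δ^P; in particular, λ* minimizes λ ↦ ∫ (g_λ(x) − y)² dt over Δ^P if and only if λ* minimizes λ ↦ ∫ (Σ_{p∈P} λ_p f_p(x)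 − y)² dt over Δ^P. -/
open MeasureTheory
open scoped BigOperators ENNReal

/-- The mean-squared-error risk of predictor `f` under a joint distribution `μ` on `X × ℝ`,
valued in `[0, ∞]`. -/
noncomputable def mseRisk {X : Type*} [MeasurableSpace X]
    (μ : Measure (X × ℝ)) (f : X → ℝ) : ℝ≥0∞ :=
  ∫⁻ z, ENNReal.ofReal ((f z.1 - z.2) ^ 2) ∂μ



-- algebraic: expansion of weighted sum of squares
lemma wkey {P : Type*} [Fintype P] (lam a : P → ℝ) (y : ℝ) :
    ∑ p, lam p * (y - a p)^2
      = y^2 * ∑ p, lam p - 2*y*(∑ p, lam p * a p) + ∑ p, lam p * (a p)^2 := by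
  rw [Finset.mul_sum, Finset.mul_sum, ← Finset.sum_sub_distrib, ← Finset.sum_add_distrib]
  exact Finset.sum_congr rfl fun p _ => by ring

lemma wls {P : Type*} [Fintype P] (lam a : P → ℝ) (hsum : ∑ p, lam p = 1) (x : ℝ) :
    ∑ p, lam p * ((∑ q, lam q * a q) - a p)^2 ≤ ∑ p, lam p * (x - a p)^2 := by
  have h1 := wkey lam a x
  have h2 := wkey lam a (∑ q, lam q * a q)
  rw [hsum] at h1 h2
  nlinarith [sq_nonneg (x - ∑ q, lam q * a q)]

lemma sqsum_le {P : Type*} [Fintype P] (lam a : P → ℝ) (hnn : ∀ p, 0 ≤ lam p)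
    (hsum : ∑ p, lam p = 1) :
    (∑ p, lam p * a p)^2 ≤ ∑ p, lam p * (a p)^2 := by
  have h2 := wkey lam a (∑ q, lam q * a q)
  rw [hsum] at h2
  have hnn2 : 0 ≤ ∑ p, lam p * ((∑ q, lam q * a q) - a p)^2 :=
    Finset.sum_nonneg fun p _ => mul_nonneg (hnn p) (sq_nonneg _)
  nlinarith

lemma quad_zero {C D : ℝ} (hD : 0 ≤ D) (h : ∀ s : ℝ, 0 ≤ 2*s*C + s^2*D) : C = 0 := by
  by_contra hC
  have hD1 : (0:ℝ) < D + 1 := by linarith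
  have h1 := h (-(C/(D+1)))
  have heq : 2*(-(C/(D+1)))*C + (-(C/(D+1)))^2*D = -(C^2*(D+2))/(D+1)^2 := by
    field_simp; ring
  rw [heq] at h1
  have hC2 : 0 < C^2 := by positivity
  have hpos : 0 < C^2*(D+2) := by nlinarith
  have hsq : (0:ℝ) < (D+1)^2 := by positivity
  have := div_pos hpos hsq
  rw [neg_div] at h1; linarith

lemma abs_mul_half (a b : ℝ) : |a| * |b| ≤ 2⁻¹ * (a ^ 2 + b ^ 2) := by
  nlinarith [sq_nonneg (|a| - |b|), sq_abs a, sq_abs b, abs_nonneg a, abs_nonneg b]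

lemma integrable_of_lint {α : Type*} [MeasurableSpace α] {ν : Measure α} {g : α → ℝ}
    (hg : Measurable g) (hnn : ∀ a, 0 ≤ g a)
    (h : ∫⁻ a, ENNReal.ofReal (g a) ∂ν < ∞) : Integrable g ν := by
  refine ⟨hg.aestronglyMeasurable, ?_⟩
  rw [HasFiniteIntegral]
  have heq : ∀ a, ‖g a‖ₑ = ENNReal.ofReal (g a) :=
    fun a => Real.enorm_eq_ofReal (hnn a)
  rw [lintegral_congr heq]
  exact h

lemma lint_eq_ofReal {α : Type*} [MeasurableSpace α] {ν : Measure α} {g : α → ℝ}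
    (hg : Integrable g ν) (hnn : ∀ a, 0 ≤ g a) :
    ∫⁻ a, ENNReal.ofReal (g a) ∂ν = ENNReal.ofReal (∫ a, g a ∂ν) :=
  (ofReal_integral_eq_lintegral_ofReal hg (Filter.Eventually.of_forall hnn)).symm

section Pyth
variable {X : Type*} [MeasurableSpace X]

lemma risk_le (μ : Measure (X × ℝ)) (f : X → ℝ) (hf : Measurable f) :
    mseRisk μ f ≤ 2 * ∫⁻ z, ENNReal.ofReal ((f z.1)^2) ∂μ
      + 2 * ∫⁻ z, ENNReal.ofReal (z.2^2) ∂μ := by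
  have m1 : Measurable fun z : X × ℝ => ENNReal.ofReal ((f z.1)^2) :=
    ((hf.comp measurable_fst).pow_const 2).ennreal_ofReal
  have m2 : Measurable fun z : X × ℝ => ENNReal.ofReal (z.2^2) :=
    (measurable_snd.pow_const 2).ennreal_ofReal
  rw [← lintegral_const_mul 2 m1, ← lintegral_const_mul 2 m2,
    ← lintegral_add_left (m1.const_mul 2)]
  have key : ∀ a b : ℝ, (a - b) ^ 2 ≤ 2 * a ^ 2 + 2 * b ^ 2 := fun a b => by
    nlinarith [sq_nonneg (a + b)]
  refine lintegral_mono fun z => ?_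
  rw [← ENNReal.ofReal_ofNat 2, ← ENNReal.ofReal_mul (by norm_num),
    ← ENNReal.ofReal_mul (by norm_num), ← ENNReal.ofReal_add (by positivity) (by positivity)]
  exact ENNReal.ofReal_le_ofReal (key _ _)

lemma risk_lt_top (μ : Measure (X × ℝ)) (f : X → ℝ) (hf : Measurable f)
    (hf2 : ∫⁻ x, ENNReal.ofReal (f x ^ 2) ∂(μ.map Prod.fst) < ∞)
    (hY : ∫⁻ z, ENNReal.ofReal (z.2 ^ 2) ∂μ < ∞) : mseRisk μ f < ∞ := by
  rw [lintegral_map ((hf.pow_const 2).ennreal_ofReal) measurable_fst] at hf2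
  exact lt_of_le_of_lt (risk_le μ f hf)
    (ENNReal.add_lt_top.mpr ⟨ENNReal.mul_lt_top (by norm_num) hf2,
      ENNReal.mul_lt_top (by norm_num) hY⟩)

lemma pyth (μ : Measure (X × ℝ)) (ρ : Measure X) (hmarg : μ.map Prod.fst = ρ)
    (hY : ∫⁻ z, ENNReal.ofReal (z.2 ^ 2) ∂μ < ∞)
    (f : X → ℝ) (hf : Measurable f) (hf2 : ∫⁻ x, ENNReal.ofReal (f x ^ 2) ∂ρ < ∞)
    (hopt : ∀ h : X → ℝ, Measurable h → mseRisk μ f ≤ mseRisk μ h)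
    (h : X → ℝ) (hh : Measurable h) (hfin : mseRisk μ h < ∞) :
    mseRisk μ h = mseRisk μ f + ∫⁻ x, ENNReal.ofReal ((h x - f x) ^ 2) ∂ρ := by
  set F : X × ℝ → ℝ := fun z => f z.1 - z.2 with hF
  set Φ : X × ℝ → ℝ := fun z => h z.1 - f z.1 with hΦ
  have mf1 : Measurable fun z : X × ℝ => f z.1 := hf.comp measurable_fst
  have mh1 : Measurable fun z : X × ℝ => h z.1 := hh.comp measurable_fst
  have hFm : Measurable F := mf1.sub measurable_snd
  have hΦm : Measurable Φ := mh1.sub mf1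
  have hffin : mseRisk μ f < ∞ := risk_lt_top μ f hf (by rw [hmarg]; exact hf2) hY
  have iF2 : Integrable (fun z => F z ^ 2) μ :=
    integrable_of_lint (hFm.pow_const 2) (fun z => sq_nonneg _) hffin
  have iH2 : Integrable (fun z => (h z.1 - z.2) ^ 2) μ :=
    integrable_of_lint ((mh1.sub measurable_snd).pow_const 2) (fun z => sq_nonneg _) hfin
  have iΦ2 : Integrable (fun z => Φ z ^ 2) μ := by
    have ib : Integrable (fun z : X × ℝ => 2 * ((h z.1 - z.2) ^ 2 + F z ^ 2)) μ := by
      exact (iH2.add iF2).const_mul 2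
    refine ib.mono' (hΦm.pow_const 2).aestronglyMeasurable
      (Filter.Eventually.of_forall fun z => ?_)
    rw [Real.norm_eq_abs, abs_of_nonneg (sq_nonneg (Φ z))]
    simp only [hΦ, hF]
    nlinarith [sq_nonneg (h z.1 - z.2 + (f z.1 - z.2))]
  have iFΦ : Integrable (fun z => F z * Φ z) μ := by
    have ib : Integrable (fun z : X × ℝ => 2⁻¹ * (F z ^ 2 + Φ z ^ 2)) μ := by
      exact (iF2.add iΦ2).const_mul _
    refine ib.mono' (hFm.mul hΦm).aestronglyMeasurable
      (Filter.Eventually.of_forall fun z => ?_)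
    rw [Real.norm_eq_abs, abs_mul]
    exact abs_mul_half (F z) (Φ z)
  set C := ∫ z, F z * Φ z ∂μ with hC
  set D := ∫ z, Φ z ^ 2 ∂μ with hD
  have hDnn : 0 ≤ D := integral_nonneg fun z => sq_nonneg _
  have hmin : ∀ s : ℝ, 0 ≤ 2*s*C + s^2*D := by
    intro s
    have hs := hopt (fun x => f x + s * (h x - f x)) (hf.add ((hh.sub hf).const_mul s))
    have hexp : ∀ z : X × ℝ, ((f z.1 + s * (h z.1 - f z.1)) - z.2) ^ 2
        = F z ^ 2 + (2*s) * (F z * Φ z) + s^2 * Φ z ^ 2 := fun z => by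
      simp only [hF, hΦ]; ring
    have hnn : ∀ z : X × ℝ, 0 ≤ F z ^ 2 + (2*s) * (F z * Φ z) + s^2 * Φ z ^ 2 := fun z => by
      rw [← hexp z]; exact sq_nonneg _
    have i1 : Integrable (fun z => (2*s) * (F z * Φ z)) μ := iFΦ.const_mul _
    have i2 : Integrable (fun z => s^2 * Φ z ^ 2) μ := iΦ2.const_mul _
    have i12 : Integrable (fun z => F z ^ 2 + (2*s) * (F z * Φ z)) μ := by exact iF2.add i1
    have iPert : Integrable (fun z => F z ^ 2 + (2*s) * (F z * Φ z) + s^2 * Φ z ^ 2) μ := by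
      exact i12.add i2
    have hrisk : mseRisk μ (fun x => f x + s * (h x - f x))
        = ENNReal.ofReal (∫ z, F z ^ 2 ∂μ + (2*s)*C + s^2*D) := by
      rw [mseRisk, lintegral_congr fun z => congrArg ENNReal.ofReal (hexp z),
        lint_eq_ofReal iPert hnn,
        integral_add i12 i2, integral_add iF2 i1, integral_const_mul _ _, integral_const_mul _ _]
    have hriskf : mseRisk μ f = ENNReal.ofReal (∫ z, F z ^ 2 ∂μ) :=
      lint_eq_ofReal iF2 fun z => sq_nonneg _
    rw [hrisk, hriskf] at hs
    have hnn' : 0 ≤ ∫ z, F z ^ 2 ∂μ + (2*s)*C + s^2*D := by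
      have h1 : 0 ≤ ∫ z, F z ^ 2 + (2*s) * (F z * Φ z) + s^2 * Φ z ^ 2 ∂μ :=
        integral_nonneg hnn
      rwa [integral_add i12 i2, integral_add iF2 i1, integral_const_mul _ _,
        integral_const_mul _ _] at h1
    have := (ENNReal.ofReal_le_ofReal_iff hnn').mp hs
    linarith
  have hC0 : C = 0 := quad_zero hDnn hmin
  have hexp2 : ∀ z : X × ℝ, (h z.1 - z.2) ^ 2 = F z ^ 2 + 2 * (F z * Φ z) + Φ z ^ 2 :=
    fun z => by simp only [hF, hΦ]; ring
  have hnn2 : ∀ z : X × ℝ, 0 ≤ F z ^ 2 + 2 * (F z * Φ z) + Φ z ^ 2 := fun z => by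
    rw [← hexp2 z]; exact sq_nonneg _
  have j1 : Integrable (fun z => 2 * (F z * Φ z)) μ := iFΦ.const_mul _
  have j12 : Integrable (fun z => F z ^ 2 + 2 * (F z * Φ z)) μ := by exact iF2.add j1
  have jPert : Integrable (fun z => F z ^ 2 + 2 * (F z * Φ z) + Φ z ^ 2) μ := by
    exact j12.add iΦ2
  have hI0 : (∫ z, F z * Φ z ∂μ) = 0 := by rw [← hC]; exact hC0
  have hrh : mseRisk μ h = ENNReal.ofReal (∫ z, F z ^ 2 ∂μ + D) := by
    rw [mseRisk, lintegral_congr fun z => congrArg ENNReal.ofReal (hexp2 z),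
      lint_eq_ofReal jPert hnn2,
      integral_add j12 iΦ2, integral_add iF2 j1, integral_const_mul _ _, hI0, hD]
    norm_num
  have hrf : mseRisk μ f = ENNReal.ofReal (∫ z, F z ^ 2 ∂μ) :=
    lint_eq_ofReal iF2 fun z => sq_nonneg _
  have hD' : ∫⁻ x, ENNReal.ofReal ((h x - f x) ^ 2) ∂ρ = ENNReal.ofReal D := by
    rw [← hmarg, lintegral_map (f := fun x => ENNReal.ofReal ((h x - f x) ^ 2)) (((hh.sub hf).pow_const 2).ennreal_ofReal) measurable_fst]
    exact lint_eq_ofReal iΦ2 fun z => sq_nonneg _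
  rw [hrh, hrf, hD', ← ENNReal.ofReal_add (integral_nonneg fun z => sq_nonneg _) hDnn]

end Pyth


section Mix
variable {X : Type*} [MeasurableSpace X] {P : Type*} [Fintype P]

lemma risk_mix (μ : P → Measure (X × ℝ)) (L : P → ℝ≥0∞) (u : X → ℝ) :
    mseRisk (∑ p, L p • μ p) u = ∑ p, L p * mseRisk (μ p) u := by
  rw [mseRisk, lintegral_finset_sum_measure]
  exact Finset.sum_congr rfl fun p _ => lintegral_smul_measure _ _

lemma lam_sum_one (lam : P → ℝ) (hnn : ∀ p, 0 ≤ lam p) (hsum : ∑ p, lam p = 1) :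
    ∑ p, ENNReal.ofReal (lam p) = 1 := by
  rw [← ENNReal.ofReal_sum_of_nonneg fun p _ => hnn p, hsum, ENNReal.ofReal_one]

lemma mix_marg (μ : P → Measure (X × ℝ)) (ρ : Measure X)
    (hMarg : ∀ p, (μ p).map Prod.fst = ρ)
    (lam : P → ℝ) (hnn : ∀ p, 0 ≤ lam p) (hsum : ∑ p, lam p = 1) :
    (∑ p, ENNReal.ofReal (lam p) • μ p).map Prod.fst = ρ := by
  ext s hs
  rw [Measure.map_apply measurable_fst hs, Measure.finset_sum_apply]
  have heach : ∀ p, (ENNReal.ofReal (lam p) • μ p) (Prod.fst ⁻¹' s)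
      = ENNReal.ofReal (lam p) * ρ s := fun p => by
    rw [Measure.smul_apply, smul_eq_mul, ← hMarg p, Measure.map_apply measurable_fst hs]
  rw [Finset.sum_congr rfl fun p _ => heach p, ← Finset.sum_mul,
    lam_sum_one lam hnn hsum, one_mul]

end Mix

/-- Sources `μ p` on `X × ℝ` are probability measures with common `X`-marginal
`ρ` and square-integrable `y`; `f p` is a square-integrable Bayes optimal (MSE-minimizing)
predictor for `μ p`. The target `t` is a probability measure whose `X`-marginal is absolutely
continuous w.r.t. `ρ`, with `y` and each `f p` square-integrable. Then for any family
`g λ` of square-integrable MSE-minimizers for the mixtures `μ_λ = Σ_p λ_p μ_p`, the target risk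
of `g λ` equals that of `x ↦ Σ_p λ_p f_p(x)` for every `λ` in the simplex; in particular `λ*`
minimizes the bi-level objective `λ ↦ ∫(g_λ(x) − y)² dt` over the simplex iff it minimizes the
convex MixMin objective `λ ↦ ∫(Σ_p λ_p f_p(x) − y)² dt` over the simplex. -/
theorem data_mixing_eq_mixmin_mse
    {X : Type*} [MeasurableSpace X] {P : Type*} [Fintype P] [Nonempty P]
    (μ : P → Measure (X × ℝ)) (hProb : ∀ p, IsProbabilityMeasure (μ p))
    (ρ : Measure X) (hMarg : ∀ p, (μ p).map Prod.fst = ρ)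
    (hY : ∀ p, ∫⁻ z, ENNReal.ofReal (z.2 ^ 2) ∂(μ p) < ∞)
    (f : P → X → ℝ) (hfMeas : ∀ p, Measurable (f p))
    (hfL2 : ∀ p, ∫⁻ x, ENNReal.ofReal (f p x ^ 2) ∂ρ < ∞)
    (hfOpt : ∀ p, ∀ h : X → ℝ, Measurable h → mseRisk (μ p) (f p) ≤ mseRisk (μ p) h)
    (t : Measure (X × ℝ)) (hTProb : IsProbabilityMeasure t)
    (hTac : t.map Prod.fst ≪ ρ)
    (hTY : ∫⁻ z, ENNReal.ofReal (z.2 ^ 2) ∂t < ∞)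
    (hTf : ∀ p, ∫⁻ x, ENNReal.ofReal (f p x ^ 2) ∂(t.map Prod.fst) < ∞)
    (g : (P → ℝ) → X → ℝ)
    (hgMeas : ∀ lam : P → ℝ, (∀ p, 0 ≤ lam p) → (∑ p, lam p) = 1 → Measurable (g lam))
    (hgL2 : ∀ lam : P → ℝ, (∀ p, 0 ≤ lam p) → (∑ p, lam p) = 1 →
      ∫⁻ x, ENNReal.ofReal (g lam x ^ 2) ∂ρ < ∞)
    (hgOpt : ∀ lam : P → ℝ, (∀ p, 0 ≤ lam p) → (∑ p, lam p) = 1 →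
      ∀ h : X → ℝ, Measurable h →
        mseRisk (∑ p, ENNReal.ofReal (lam p) • μ p) (g lam)
          ≤ mseRisk (∑ p, ENNReal.ofReal (lam p) • μ p) h) :
    (∀ lam : P → ℝ, (∀ p, 0 ≤ lam p) → (∑ p, lam p) = 1 →
        mseRisk t (g lam) = mseRisk t (fun x => ∑ p, lam p * f p x)) ∧
    (∀ lamStar : P → ℝ, (∀ p, 0 ≤ lamStar p) → (∑ p, lamStar p) = 1 →
      ((∀ lam : P → ℝ, (∀ p, 0 ≤ lam p) → (∑ p, lam p) = 1 →
          mseRisk t (g lamStar) ≤ mseRisk t (g lam)) ↔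
        (∀ lam : P → ℝ, (∀ p, 0 ≤ lam p) → (∑ p, lam p) = 1 →
          mseRisk t (fun x => ∑ p, lamStar p * f p x)
            ≤ mseRisk t (fun x => ∑ p, lam p * f p x)))) := by
  classical
  have hfbarMeas : ∀ lam : P → ℝ, Measurable (fun x => ∑ p, lam p * f p x) :=
    fun lam => Finset.measurable_sum _ fun p _ => (hfMeas p).const_mul _
  have key : ∀ lam : P → ℝ, (∀ p, 0 ≤ lam p) → (∑ p, lam p) = 1 →
      mseRisk t (g lam) = mseRisk t (fun x => ∑ p, lam p * f p x) := by
    intro lam hnn hsum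
    set L : P → ℝ≥0∞ := fun p => ENNReal.ofReal (lam p) with hL
    set mix : Measure (X × ℝ) := ∑ p, ENNReal.ofReal (lam p) • μ p with hmix
    set fbar : X → ℝ := fun x => ∑ p, lam p * f p x with hfbar
    have hmarg : mix.map Prod.fst = ρ := mix_marg μ ρ hMarg lam hnn hsum
    have hYmix : ∫⁻ z, ENNReal.ofReal (z.2 ^ 2) ∂mix < ∞ := by
      rw [hmix, lintegral_finset_sum_measure]
      refine ENNReal.sum_lt_top.mpr fun p _ => ?_
      rw [lintegral_smul_measure]
      exact ENNReal.mul_lt_top ENNReal.ofReal_lt_top (hY p)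
    have hfbar2 : ∫⁻ x, ENNReal.ofReal (fbar x ^ 2) ∂ρ < ∞ := by
      have hle : ∀ x, ENNReal.ofReal (fbar x ^ 2)
          ≤ ENNReal.ofReal (∑ p, lam p * f p x ^ 2) := fun x =>
        ENNReal.ofReal_le_ofReal (sqsum_le lam (fun p => f p x) hnn hsum)
      refine lt_of_le_of_lt (lintegral_mono hle) ?_
      have heq : ∀ x, ENNReal.ofReal (∑ p, lam p * f p x ^ 2)
          = ∑ p, ENNReal.ofReal (lam p) * ENNReal.ofReal (f p x ^ 2) := fun x => by
        rw [← Finset.sum_congr rfl fun p _ => ENNReal.ofReal_mul (p := lam p) (hnn p)]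
        exact ENNReal.ofReal_sum_of_nonneg fun p _ => mul_nonneg (hnn p) (sq_nonneg _)
      rw [lintegral_congr heq,
        lintegral_finset_sum _ fun p _ => ((hfMeas p).pow_const 2).ennreal_ofReal.const_mul _]
      refine ENNReal.sum_lt_top.mpr fun p _ => ?_
      rw [lintegral_const_mul _ ((hfMeas p).pow_const 2).ennreal_ofReal]
      exact ENNReal.mul_lt_top ENNReal.ofReal_lt_top (hfL2 p)
    have hfbarRisk : ∀ p, mseRisk (μ p) fbar < ∞ := fun p =>
      risk_lt_top (μ p) fbar (hfbarMeas lam) (by rw [hMarg p]; exact hfbar2) (hY p)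
    have hdecomp : ∀ p, ∀ h : X → ℝ, Measurable h → mseRisk (μ p) h < ∞ →
        mseRisk (μ p) h = mseRisk (μ p) (f p)
          + ∫⁻ x, ENNReal.ofReal ((h x - f p x) ^ 2) ∂ρ :=
      fun p h hh hfin =>
        pyth (μ p) ρ (hMarg p) (hY p) (f p) (hfMeas p) (hfL2 p) (hfOpt p) h hh hfin
    have conv : ∀ u : X → ℝ, Measurable u →
        (∑ p, L p * ∫⁻ x, ENNReal.ofReal ((u x - f p x) ^ 2) ∂ρ)
          = ∫⁻ x, ENNReal.ofReal (∑ p, lam p * (u x - f p x) ^ 2) ∂ρ := by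
      intro u hu
      have hm : ∀ p, Measurable fun x => ENNReal.ofReal ((u x - f p x) ^ 2) :=
        fun p => (((hu.sub (hfMeas p)).pow_const 2)).ennreal_ofReal
      rw [← Finset.sum_congr rfl fun p _ => lintegral_const_mul (L p) (hm p),
        ← lintegral_finset_sum _ fun p _ => (hm p).const_mul _]
      refine lintegral_congr fun x => ?_
      rw [ENNReal.ofReal_sum_of_nonneg fun p _ => mul_nonneg (hnn p) (sq_nonneg _)]
      exact Finset.sum_congr rfl fun p _ => (ENNReal.ofReal_mul (hnn p)).symm
    have hmixOpt : ∀ h : X → ℝ, Measurable h → mseRisk mix fbar ≤ mseRisk mix h := by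
      intro h hh
      rw [hmix, risk_mix, risk_mix]
      by_cases hcase : ∃ p, lam p ≠ 0 ∧ mseRisk (μ p) h = ∞
      · obtain ⟨p, hp0, hpinf⟩ := hcase
        have htop : ∑ p, ENNReal.ofReal (lam p) * mseRisk (μ p) h = ∞ :=
          ENNReal.sum_eq_top.mpr ⟨p, Finset.mem_univ p, by
            rw [hpinf]
            exact ENNReal.mul_top (by simp [ENNReal.ofReal_eq_zero, hp0,
              lt_of_le_of_ne (hnn p) (Ne.symm hp0), not_le.mpr])⟩
        rw [htop]
        exact le_top
      · push_neg at hcase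
        have hfinh : ∀ p, lam p ≠ 0 → mseRisk (μ p) h < ∞ :=
          fun p hp => lt_top_iff_ne_top.mpr (hcase p hp)
        have e1 : ∀ p, ENNReal.ofReal (lam p) * mseRisk (μ p) fbar
            = L p * mseRisk (μ p) (f p)
              + L p * ∫⁻ x, ENNReal.ofReal ((fbar x - f p x) ^ 2) ∂ρ := fun p => by
          rw [hdecomp p fbar (hfbarMeas lam) (hfbarRisk p), mul_add]
        have e2 : ∀ p, ENNReal.ofReal (lam p) * mseRisk (μ p) h
            = L p * mseRisk (μ p) (f p)
              + L p * ∫⁻ x, ENNReal.ofReal ((h x - f p x) ^ 2) ∂ρ := fun p => by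
          by_cases hp : lam p = 0
          · simp [hL, hp]
          · rw [hdecomp p h hh (hfinh p hp), mul_add]
        rw [Finset.sum_congr rfl fun p _ => e1 p, Finset.sum_congr rfl fun p _ => e2 p,
          Finset.sum_add_distrib, Finset.sum_add_distrib]
        refine add_le_add le_rfl ?_
        rw [conv fbar (hfbarMeas lam), conv h hh]
        refine lintegral_mono fun x => ENNReal.ofReal_le_ofReal ?_
        exact wls lam (fun p => f p x) hsum (h x)
    have hgM : Measurable (g lam) := hgMeas lam hnn hsum
    have hgfin : mseRisk mix (g lam) < ∞ :=
      risk_lt_top mix (g lam) hgM (by rw [hmarg]; exact hgL2 lam hnn hsum) hYmix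
    have hfbarfin : mseRisk mix fbar < ∞ :=
      risk_lt_top mix fbar (hfbarMeas lam) (by rw [hmarg]; exact hfbar2) hYmix
    have hdec := pyth mix ρ hmarg hYmix fbar (hfbarMeas lam) hfbar2 hmixOpt
      (g lam) hgM hgfin
    have hle : mseRisk mix (g lam) ≤ mseRisk mix fbar := hgOpt lam hnn hsum fbar (hfbarMeas lam)
    have hzero : ∫⁻ x, ENNReal.ofReal ((g lam x - fbar x) ^ 2) ∂ρ = 0 := by
      rw [hdec] at hle
      nth_rewrite 2 [← add_zero (mseRisk mix fbar)] at hle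
      exact le_zero_iff.mp ((ENNReal.add_le_add_iff_left hfbarfin.ne).mp hle)
    have haeρ : ∀ᵐ x ∂ρ, g lam x = fbar x := by
      have hmeasd : Measurable fun x => ENNReal.ofReal ((g lam x - fbar x) ^ 2) :=
        ((hgM.sub (hfbarMeas lam)).pow_const 2).ennreal_ofReal
      filter_upwards [(lintegral_eq_zero_iff hmeasd).mp hzero] with x hx
      simp only [Pi.zero_apply, ENNReal.ofReal_eq_zero] at hx
      have h0 : (g lam x - fbar x) ^ 2 = 0 := le_antisymm hx (sq_nonneg _)
      have := pow_eq_zero_iff (n := 2) (by norm_num) |>.mp h0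
      linarith
    have haet : ∀ᵐ z ∂t, g lam z.1 = fbar z.1 := by
      have haeT : ∀ᵐ x ∂(t.map Prod.fst), g lam x = fbar x := hTac.ae_le haeρ
      rw [ae_map_iff measurable_fst.aemeasurable
        (measurableSet_eq_fun hgM (hfbarMeas lam))] at haeT
      exact haeT
    refine lintegral_congr_ae ?_
    filter_upwards [haet] with z hz
    rw [hz]
  refine ⟨key, fun lamS hnnS hsumS => ?_⟩
  constructor
  · intro H lam hnn hsum
    rw [← key lamS hnnS hsumS, ← key lam hnn hsum]
    exact H lam hnn hsum
  · intro H lam hnn hsum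
    rw [key lamS hnnS hsumS, key lam hnn hsum]
    exact H lam hnn hsum
end

section
/- Let X be a measurable space, P a nonempty finite index set, and for each p ∈ P let μ_p be a probability measure on X × ℝ such that all μ_p have the same marginal ρ on X and ∫ y² dμ_p(x,y) < ∞. For each p let f_p : X → ℝ be measurable with ∫ f_p² dρ < ∞ minimizing f ↦ ∫ (f(x) − y)² dμ_p(x,y) over all measurable f : X → ℝ. Then for every λ ∈ Δ^P, the function x ↦ Σ_{p∈P} λ_p f_p(x) minimizes f ↦ ∫ (f(x) − y)² d(Σ_{p∈P} λ_p μ_p)(x,y) over all measurable f : X → ℝ. -/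
open MeasureTheory
open scoped BigOperators ENNReal

lemma memL2_of_lintegral_sq {α : Type*} [MeasurableSpace α] {μ : Measure α}
    {h : α → ℝ} (hm : Measurable h) (hfin : ∫⁻ x, ENNReal.ofReal (h x ^ 2) ∂μ < ∞) :
    MemLp h 2 μ := by
  rw [memLp_two_iff_integrable_sq hm.aestronglyMeasurable]
  refine ⟨(hm.pow_const 2).aestronglyMeasurable, ?_⟩
  have : ∀ x, ‖h x ^ 2‖ₑ = ENNReal.ofReal (h x ^ 2) := fun x =>
    Real.enorm_eq_ofReal (sq_nonneg _)
  simpa only [HasFiniteIntegral, this] using hfin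

lemma integrable_mul_of_L2 {α : Type*} [MeasurableSpace α] {μ : Measure α}
    {a b : α → ℝ} (ha : MemLp a 2 μ) (hb : MemLp b 2 μ) :
    Integrable (fun x => a x * b x) μ := by
  have h1 : Integrable (fun x => (a x + b x) ^ 2) μ := (ha.add hb).integrable_sq
  have h2 := ha.integrable_sq
  have h3 := hb.integrable_sq
  have heq : (fun x => a x * b x) = fun x => (((a x + b x) ^ 2 - a x ^ 2) - b x ^ 2) / 2 := by
    funext x; ring
  rw [heq]
  exact ((h1.sub h2).sub h3).div_const 2

lemma ortho_aux {X : Type*} [MeasurableSpace X] (μ : Measure (X × ℝ))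
    {f h : X → ℝ} (hfm : Measurable f) (hhm : Measurable h)
    (hf2 : MemLp (fun z : X × ℝ => f z.1) 2 μ)
    (hh2 : MemLp (fun z : X × ℝ => h z.1) 2 μ)
    (hY2 : MemLp (fun z : X × ℝ => z.2) 2 μ)
    (hopt : ∀ g : X → ℝ, Measurable g → mseRisk μ f ≤ mseRisk μ g) :
    ∫ z, h z.1 * (f z.1 - z.2) ∂μ = 0 := by
  set A := ∫ z, h z.1 * (f z.1 - z.2) ∂μ with hA
  set B := ∫ z, (h z.1) ^ 2 ∂μ with hBdef
  set R := ∫ z, (f z.1 - z.2) ^ 2 ∂μ with hRdef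
  have hFy : MemLp (fun z : X × ℝ => f z.1 - z.2) 2 μ := hf2.sub hY2
  have iR : Integrable (fun z : X × ℝ => (f z.1 - z.2) ^ 2) μ := hFy.integrable_sq
  have iA : Integrable (fun z : X × ℝ => h z.1 * (f z.1 - z.2)) μ :=
    integrable_mul_of_L2 hh2 hFy
  have iB : Integrable (fun z : X × ℝ => (h z.1) ^ 2) μ := hh2.integrable_sq
  have hB : 0 ≤ B := integral_nonneg fun z => sq_nonneg _
  have key : ∀ t : ℝ, 0 ≤ 2 * t * A + t ^ 2 * B := by
    intro t
    have hg : Measurable fun x => f x + t * h x := hfm.add (measurable_const.mul hhm)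
    have hle := hopt _ hg
    have iSum : Integrable (fun z : X × ℝ =>
        (f z.1 - z.2) ^ 2 + (2 * t) * (h z.1 * (f z.1 - z.2)) + t ^ 2 * (h z.1) ^ 2) μ :=
      (iR.add (iA.const_mul _)).add (iB.const_mul _)
    have hint : ∫ z, ((f z.1 + t * h z.1) - z.2) ^ 2 ∂μ = R + 2 * t * A + t ^ 2 * B := by
      have expand : (fun z : X × ℝ => ((f z.1 + t * h z.1) - z.2) ^ 2)
          = fun z : X × ℝ =>
            (f z.1 - z.2) ^ 2 + (2 * t) * (h z.1 * (f z.1 - z.2)) + t ^ 2 * (h z.1) ^ 2 := by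
        funext z; ring
      have step1 := integral_add (μ := μ) (iR.add (iA.const_mul (2 * t))) (iB.const_mul (t ^ 2))
      have step2 := integral_add (μ := μ) iR (iA.const_mul (2 * t))
      simp only [Pi.add_apply] at step1
      rw [expand, step1, step2, integral_const_mul, integral_const_mul]
    have hR1 : mseRisk μ f = ENNReal.ofReal R :=
      (ofReal_integral_eq_lintegral_ofReal iR
        (Filter.Eventually.of_forall fun z => sq_nonneg _)).symm
    have iSum' : Integrable (fun z : X × ℝ => ((f z.1 + t * h z.1) - z.2) ^ 2) μ := by
      refine iSum.congr (Filter.Eventually.of_forall fun z => ?_)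
      ring
    have hR2 : mseRisk μ (fun x => f x + t * h x)
        = ENNReal.ofReal (R + 2 * t * A + t ^ 2 * B) := by
      rw [← hint]
      exact (ofReal_integral_eq_lintegral_ofReal iSum'
        (Filter.Eventually.of_forall fun z => sq_nonneg _)).symm
    have hnn : 0 ≤ R + 2 * t * A + t ^ 2 * B := by
      rw [← hint]; exact integral_nonneg fun z => sq_nonneg _
    rw [hR1, hR2] at hle
    have := (ENNReal.ofReal_le_ofReal_iff hnn).mp hle
    linarith
  have hB1 : (0 : ℝ) < B + 1 := by linarith
  have key' := key (-A / (B + 1))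
  have e : 2 * (-A / (B + 1)) * A + (-A / (B + 1)) ^ 2 * B
      = -(A ^ 2 * (B + 2)) / (B + 1) ^ 2 := by
    field_simp; ring
  rw [e] at key'
  have h4 := mul_nonneg key' (sq_nonneg (B + 1))
  rw [div_mul_cancel₀ _ (pow_ne_zero 2 hB1.ne')] at h4
  have hA2 : A ^ 2 = 0 := le_antisymm (by nlinarith) (sq_nonneg A)
  exact pow_eq_zero_iff (by norm_num) |>.mp hA2


/-- If the sources `μ p` on `X × ℝ` are probability measures with the same
`X`-marginal `ρ`, square-integrable `y`, and `f p` is a square-integrable Bayes optimal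
(MSE-minimizing) predictor for `μ p`, then for every `λ` in the simplex, `x ↦ Σ_p λ_p f_p(x)`
minimizes the MSE risk for the mixture `Σ_p λ_p μ_p` over all measurable predictors. -/
theorem bayes_optimal_of_mixture_is_mixture_mse
    {X : Type*} [MeasurableSpace X] {P : Type*} [Fintype P] [Nonempty P]
    (μ : P → Measure (X × ℝ)) (hProb : ∀ p, IsProbabilityMeasure (μ p))
    (ρ : Measure X) (hMarg : ∀ p, (μ p).map Prod.fst = ρ)
    (hY : ∀ p, ∫⁻ z, ENNReal.ofReal (z.2 ^ 2) ∂(μ p) < ∞)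
    (f : P → X → ℝ) (hfMeas : ∀ p, Measurable (f p))
    (hfL2 : ∀ p, ∫⁻ x, ENNReal.ofReal (f p x ^ 2) ∂ρ < ∞)
    (hfOpt : ∀ p, ∀ g : X → ℝ, Measurable g → mseRisk (μ p) (f p) ≤ mseRisk (μ p) g)
    (lam : P → ℝ) (hNonneg : ∀ p, 0 ≤ lam p) (hSum : (∑ p, lam p) = 1) :
    ∀ g : X → ℝ, Measurable g →
      mseRisk (∑ p, ENNReal.ofReal (lam p) • μ p) (fun x => ∑ p, lam p * f p x)
        ≤ mseRisk (∑ p, ENNReal.ofReal (lam p) • μ p) g := by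
  intro g hg
  classical
  set F : X → ℝ := fun x => ∑ p, lam p * f p x with hFdef
  have hFm : Measurable F :=
    Finset.measurable_sum _ fun p _ => measurable_const.mul (hfMeas p)
  set ν : Measure (X × ℝ) := ∑ p, ENNReal.ofReal (lam p) • μ p with hν
  have riskSum : ∀ h : X → ℝ,
      mseRisk ν h = ∑ p, ENNReal.ofReal (lam p) * mseRisk (μ p) h := by
    intro h
    simp only [mseRisk, hν]
    rw [lintegral_finset_sum_measure]
    exact Finset.sum_congr rfl fun p _ => lintegral_smul_measure _ _
  by_cases htop : mseRisk ν g = ⊤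
  · rw [htop]; exact le_top
  have hfin : mseRisk ν g < ⊤ := lt_top_iff_ne_top.mpr htop
  -- basic ℒ² facts
  have hYp : ∀ p, MemLp (fun z : X × ℝ => z.2) 2 (μ p) := fun p =>
    memL2_of_lintegral_sq measurable_snd (hY p)
  have mp : ∀ p, MeasurePreserving (Prod.fst) (μ p) ρ := fun p => ⟨measurable_fst, hMarg p⟩
  have hfρ : ∀ p, MemLp (f p) 2 ρ := fun p => memL2_of_lintegral_sq (hfMeas p) (hfL2 p)
  have hfp : ∀ p, MemLp (fun z : X × ℝ => f p z.1) 2 (μ p) := fun p =>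
    (hfρ p).comp_measurePreserving (mp p)
  have hFρ : MemLp F 2 ρ :=
    memLp_finset_sum Finset.univ fun p _ => (hfρ p).const_mul (lam p)
  have hFp : ∀ p, MemLp (fun z : X × ℝ => F z.1) 2 (μ p) := fun p =>
    hFρ.comp_measurePreserving (mp p)
  -- g is L² for ρ
  have hone : (∑ p, ENNReal.ofReal (lam p)) = 1 := by
    rw [← ENNReal.ofReal_sum_of_nonneg fun p _ => hNonneg p, hSum, ENNReal.ofReal_one]
  have hYν : ∫⁻ z, ENNReal.ofReal (z.2 ^ 2) ∂ν < ⊤ := by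
    rw [hν, lintegral_finset_sum_measure]
    refine ENNReal.sum_lt_top.mpr fun p _ => ?_
    rw [lintegral_smul_measure]
    exact ENNReal.mul_lt_top ENNReal.ofReal_lt_top (hY p)
  have hgρ : MemLp g 2 ρ := by
    apply memL2_of_lintegral_sq hg
    have e2 : ∫⁻ z, ENNReal.ofReal (g z.1 ^ 2) ∂ν = ∫⁻ x, ENNReal.ofReal (g x ^ 2) ∂ρ := by
      rw [hν, lintegral_finset_sum_measure]
      have key : ∀ p, ∫⁻ z : X × ℝ, ENNReal.ofReal (g z.1 ^ 2)
          ∂(ENNReal.ofReal (lam p) • μ p)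
          = ENNReal.ofReal (lam p) * ∫⁻ x, ENNReal.ofReal (g x ^ 2) ∂ρ := by
        intro p
        rw [lintegral_smul_measure, ← hMarg p,
          lintegral_map ((hg.pow_const 2).ennreal_ofReal) measurable_fst, smul_eq_mul]
      rw [Finset.sum_congr rfl fun p _ => key p, ← Finset.sum_mul, hone, one_mul]
    rw [← e2]
    have pt : ∀ z : X × ℝ, ENNReal.ofReal (g z.1 ^ 2)
        ≤ 2 * ENNReal.ofReal ((g z.1 - z.2) ^ 2) + 2 * ENNReal.ofReal (z.2 ^ 2) := by
      intro z
      have h1 : g z.1 ^ 2 ≤ 2 * (g z.1 - z.2) ^ 2 + 2 * z.2 ^ 2 := by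
        nlinarith [sq_nonneg (g z.1 - 2 * z.2)]
      calc ENNReal.ofReal (g z.1 ^ 2)
          ≤ ENNReal.ofReal (2 * (g z.1 - z.2) ^ 2 + 2 * z.2 ^ 2) :=
            ENNReal.ofReal_le_ofReal h1
        _ = 2 * ENNReal.ofReal ((g z.1 - z.2) ^ 2) + 2 * ENNReal.ofReal (z.2 ^ 2) := by
            rw [ENNReal.ofReal_add (by positivity) (by positivity),
              ENNReal.ofReal_mul (by norm_num), ENNReal.ofReal_mul (by norm_num),
              ENNReal.ofReal_ofNat]
    calc ∫⁻ z, ENNReal.ofReal (g z.1 ^ 2) ∂ν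
        ≤ ∫⁻ z, (2 * ENNReal.ofReal ((g z.1 - z.2) ^ 2) + 2 * ENNReal.ofReal (z.2 ^ 2)) ∂ν :=
          lintegral_mono pt
      _ = 2 * mseRisk ν g + 2 * ∫⁻ z, ENNReal.ofReal (z.2 ^ 2) ∂ν := by
          have m1 : Measurable fun z : X × ℝ => ENNReal.ofReal ((g z.1 - z.2) ^ 2) :=
            (((hg.comp measurable_fst).sub measurable_snd).pow_const 2).ennreal_ofReal
          have m2 : Measurable fun z : X × ℝ => ENNReal.ofReal (z.2 ^ 2) :=
            (measurable_snd.pow_const 2).ennreal_ofReal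
          rw [lintegral_add_left (m1.const_mul 2), lintegral_const_mul 2 m1,
            lintegral_const_mul 2 m2]
          rfl
      _ < ⊤ := ENNReal.add_lt_top.mpr
          ⟨ENNReal.mul_lt_top (by norm_num) hfin, ENNReal.mul_lt_top (by norm_num) hYν⟩
  have hgp' : ∀ p, MemLp (fun z : X × ℝ => g z.1) 2 (μ p) := fun p =>
    hgρ.comp_measurePreserving (mp p)
  -- integrabilities
  have iRg : ∀ p, Integrable (fun z : X × ℝ => (g z.1 - z.2) ^ 2) (μ p) := fun p =>
    ((hgp' p).sub (hYp p)).integrable_sq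
  have iRF : ∀ p, Integrable (fun z : X × ℝ => (F z.1 - z.2) ^ 2) (μ p) := fun p =>
    ((hFp p).sub (hYp p)).integrable_sq
  have iQ : ∀ p, Integrable (fun z : X × ℝ => (g z.1 - F z.1) ^ 2) (μ p) := fun p =>
    ((hgp' p).sub (hFp p)).integrable_sq
  have iC : ∀ p, Integrable (fun z : X × ℝ => (g z.1 - F z.1) * (F z.1 - f p z.1)) (μ p) :=
    fun p => integrable_mul_of_L2 ((hgp' p).sub (hFp p)) ((hFp p).sub (hfp p))
  have iO : ∀ p, Integrable (fun z : X × ℝ => (g z.1 - F z.1) * (f p z.1 - z.2)) (μ p) :=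
    fun p => integrable_mul_of_L2 ((hgp' p).sub (hFp p)) ((hfp p).sub (hYp p))
  -- orthogonality
  have orth : ∀ p, ∫ z, (g z.1 - F z.1) * (f p z.1 - z.2) ∂(μ p) = 0 := by
    intro p
    have := ortho_aux (μ p) (h := fun x => g x - F x) (hfMeas p) (hg.sub hFm)
      (hfp p) ((hgp' p).sub (hFp p)) (hYp p) (hfOpt p)
    simpa using this
  -- transfer the cross term to ρ
  have Ctrans : ∀ p, ∫ z, (g z.1 - F z.1) * (F z.1 - f p z.1) ∂(μ p)
      = ∫ x, (g x - F x) * (F x - f p x) ∂ρ := by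
    intro p
    rw [← hMarg p, integral_map (f := fun x => (g x - F x) * (F x - f p x)) measurable_fst.aemeasurable
      (((hg.sub hFm).mul (hFm.sub (hfMeas p))).aestronglyMeasurable)]
  -- per-p decomposition
  have iden : ∀ p, ∫ z, (g z.1 - z.2) ^ 2 ∂(μ p)
      = ∫ z, (F z.1 - z.2) ^ 2 ∂(μ p) + ∫ z, (g z.1 - F z.1) ^ 2 ∂(μ p)
        + 2 * ∫ x, (g x - F x) * (F x - f p x) ∂ρ := by
    intro p
    have expand : (fun z : X × ℝ => (g z.1 - z.2) ^ 2) = fun z : X × ℝ =>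
        ((F z.1 - z.2) ^ 2 + (g z.1 - F z.1) ^ 2)
          + (2 * ((g z.1 - F z.1) * (F z.1 - f p z.1))
            + 2 * ((g z.1 - F z.1) * (f p z.1 - z.2))) := by
      funext z; ring
    have s1 := integral_add (μ := μ p) ((iRF p).add (iQ p))
      (((iC p).const_mul 2).add ((iO p).const_mul 2))
    have s2 := integral_add (μ := μ p) (iRF p) (iQ p)
    have s3 := integral_add (μ := μ p) ((iC p).const_mul 2) ((iO p).const_mul 2)
    simp only [Pi.add_apply] at s1 s2 s3
    rw [expand, s1, s2, s3, integral_const_mul, integral_const_mul, orth p, Ctrans p]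
    ring
  -- sum of cross terms vanishes
  have sumC : ∑ p, lam p * ∫ x, (g x - F x) * (F x - f p x) ∂ρ = 0 := by
    have iCρ : ∀ p, Integrable (fun x => lam p * ((g x - F x) * (F x - f p x))) ρ :=
      fun p => (integrable_mul_of_L2 (hgρ.sub hFρ) (hFρ.sub (hfρ p))).const_mul _
    have e : ∑ p, lam p * ∫ x, (g x - F x) * (F x - f p x) ∂ρ
        = ∫ x, ∑ p, lam p * ((g x - F x) * (F x - f p x)) ∂ρ := by
      calc ∑ p, lam p * ∫ x, (g x - F x) * (F x - f p x) ∂ρ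
          = ∑ p, ∫ x, lam p * ((g x - F x) * (F x - f p x)) ∂ρ :=
            Finset.sum_congr rfl fun p _ => (integral_const_mul _ _).symm
        _ = ∫ x, ∑ p, lam p * ((g x - F x) * (F x - f p x)) ∂ρ :=
            (integral_finset_sum Finset.univ fun p _ => iCρ p).symm
    rw [e]
    have pt0 : ∀ x, ∑ p, lam p * ((g x - F x) * (F x - f p x)) = 0 := by
      intro x
      have step : ∑ p, lam p * ((g x - F x) * (F x - f p x))
          = ∑ p, ((g x - F x) * F x * lam p - (g x - F x) * (lam p * f p x)) :=
        Finset.sum_congr rfl fun p _ => by ring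
      rw [step, Finset.sum_sub_distrib, ← Finset.mul_sum, ← Finset.mul_sum, hSum]
      have hFx : ∑ p, lam p * f p x = F x := rfl
      rw [hFx]; ring
    simp only [pt0, integral_zero]
  -- main real inequality
  have mainR : ∑ p, lam p * ∫ z, (F z.1 - z.2) ^ 2 ∂(μ p)
      ≤ ∑ p, lam p * ∫ z, (g z.1 - z.2) ^ 2 ∂(μ p) := by
    have e : ∑ p, lam p * ∫ z, (g z.1 - z.2) ^ 2 ∂(μ p)
        = ∑ p, (lam p * ∫ z, (F z.1 - z.2) ^ 2 ∂(μ p)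
            + lam p * ∫ z, (g z.1 - F z.1) ^ 2 ∂(μ p)
            + 2 * (lam p * ∫ x, (g x - F x) * (F x - f p x) ∂ρ)) :=
      Finset.sum_congr rfl fun p _ => by rw [iden p]; ring
    rw [e, Finset.sum_add_distrib, Finset.sum_add_distrib, ← Finset.mul_sum, sumC,
      mul_zero, add_zero]
    have hQ : 0 ≤ ∑ p, lam p * ∫ z, (g z.1 - F z.1) ^ 2 ∂(μ p) :=
      Finset.sum_nonneg fun p _ =>
        mul_nonneg (hNonneg p) (integral_nonneg fun z => sq_nonneg _)
    linarith
  -- convert to ℝ≥0∞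
  have convRisk : ∀ (h : X → ℝ),
      (∀ p, Integrable (fun z : X × ℝ => (h z.1 - z.2) ^ 2) (μ p)) →
      mseRisk ν h = ENNReal.ofReal (∑ p, lam p * ∫ z, (h z.1 - z.2) ^ 2 ∂(μ p)) := by
    intro h ih
    rw [riskSum h, ENNReal.ofReal_sum_of_nonneg fun p _ =>
      mul_nonneg (hNonneg p) (integral_nonneg fun z => sq_nonneg _)]
    refine Finset.sum_congr rfl fun p _ => ?_
    rw [ENNReal.ofReal_mul (hNonneg p),
      ofReal_integral_eq_lintegral_ofReal (ih p)
        (Filter.Eventually.of_forall fun z => sq_nonneg _)]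
    rfl
  rw [convRisk F iRF, convRisk g iRg]
  exact ENNReal.ofReal_le_ofReal mainR
end

section
/- Let Ω be a measurable space, n ≥ 1, λ ∈ Δ^n, and let q₁, …, q_n and q be probability measures on Ω. Let q̄ = Σ_{i=1}^n λ_i q_i. Then Σ_{i=1}^n λ_i · KL(q_i ‖ q̄) ≤ Σ_{i=1}^n λ_i · KL(q_i ‖ q), where both sides are taken in the extended nonnegative reals [0, ∞]. -/
open MeasureTheory

lemma sub_one_le_mul_log {t : ℝ} (ht : 0 ≤ t) : t - 1 ≤ t * Real.log t := by
  rcases eq_or_lt_of_le ht with h0 | h0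
  · simp [← h0]
  · have h := Real.log_le_sub_one_of_pos (inv_pos.mpr h0)
    rw [Real.log_inv] at h
    have h2 : 1 - t⁻¹ ≤ Real.log t := by linarith
    calc t - 1 = t * (1 - t⁻¹) := by field_simp
    _ ≤ t * Real.log t := by nlinarith

lemma integral_llr_nonneg' {Ω : Type*} [MeasurableSpace Ω] (μ ν : Measure Ω)
    [IsProbabilityMeasure μ] [IsProbabilityMeasure ν] (hac : μ ≪ ν)
    (hint : Integrable (llr μ ν) μ) : 0 ≤ ∫ x, llr μ ν x ∂μ := by
  have h1 : ∫ x, (μ.rnDeriv ν x).toReal • llr μ ν x ∂ν = ∫ x, llr μ ν x ∂μ :=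
    MeasureTheory.integral_rnDeriv_smul hac
  rw [← h1]
  have hint' : Integrable (fun x ↦ (μ.rnDeriv ν x).toReal • llr μ ν x) ν :=
    (MeasureTheory.integrable_rnDeriv_smul_iff hac).mpr hint
  have hfint : Integrable (fun x ↦ (μ.rnDeriv ν x).toReal - 1) ν :=
    Measure.integrable_toReal_rnDeriv.sub (integrable_const 1)
  have hle : ∀ᵐ x ∂ν, (μ.rnDeriv ν x).toReal - 1 ≤ (μ.rnDeriv ν x).toReal • llr μ ν x := by
    refine Filter.Eventually.of_forall fun x ↦ ?_
    simpa [llr, smul_eq_mul] using sub_one_le_mul_log (ENNReal.toReal_nonneg (a := μ.rnDeriv ν x))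
  have hmono := integral_mono_ae hfint hint' hle
  have h2 : ∫ x, ((μ.rnDeriv ν x).toReal - 1) ∂ν = 0 := by
    rw [integral_sub Measure.integrable_toReal_rnDeriv (integrable_const 1),
      Measure.integral_toReal_rnDeriv hac]
    simp
  linarith

lemma rnDeriv_finset_sum_ae {Ω ι : Type*} [MeasurableSpace Ω] (s : Finset ι) (μ : ι → Measure Ω)
    (r : Measure Ω) [IsFiniteMeasure r] [∀ i, IsFiniteMeasure (μ i)] :
    (∑ j ∈ s, μ j).rnDeriv r =ᵐ[r] fun x ↦ ∑ j ∈ s, (μ j).rnDeriv r x := by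
  classical
  have hfin : ∀ t : Finset ι, IsFiniteMeasure (∑ j ∈ t, μ j) := by
    intro t
    constructor
    rw [Measure.finset_sum_apply]
    exact ENNReal.sum_lt_top.mpr fun j _ ↦ measure_lt_top _ _
  induction s using Finset.induction with
  | empty => simp only [Finset.sum_empty]; exact Measure.rnDeriv_zero r
  | @insert a t ha ih =>
    haveI := hfin t
    rw [Finset.sum_insert ha]
    refine (Measure.rnDeriv_add' (μ a) (∑ j ∈ t, μ j) r).trans ?_
    filter_upwards [ih] with x hx
    simp [Finset.sum_insert ha, hx]


open scoped BigOperators ENNReal Classical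

/-- The Kullback–Leibler divergence `KL(μ ‖ ν)`, valued in `[0, ∞]`: it equals
`∫ log (dμ/dν) dμ` when `μ ≪ ν` (and this integral exists), and `+∞` otherwise. -/
noncomputable def klDiv {Ω : Type*} [MeasurableSpace Ω] (μ ν : Measure Ω) : ℝ≥0∞ :=
  if μ ≪ ν ∧ Integrable (MeasureTheory.llr μ ν) μ
  then ENNReal.ofReal (∫ x, MeasureTheory.llr μ ν x ∂μ)
  else ∞

/-- For probability measures `q₁, …, q_n`, `q` on `Ω` and `λ` in the simplex
`Δ^n`, the mixture `q̄ = Σ_i λ_i q_i` minimizes the `λ`-weighted average KL divergence from the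
sources: `Σ_i λ_i KL(q_i ‖ q̄) ≤ Σ_i λ_i KL(q_i ‖ q)`, in the extended nonnegative reals. -/
theorem mixture_minimizes_weighted_klDiv
    {Ω : Type*} [MeasurableSpace Ω] {n : ℕ} (hn : 1 ≤ n)
    (lam : Fin n → ℝ) (hNonneg : ∀ i, 0 ≤ lam i) (hSum : (∑ i, lam i) = 1)
    (q : Fin n → Measure Ω) (hq : ∀ i, IsProbabilityMeasure (q i))
    (r : Measure Ω) (hr : IsProbabilityMeasure r) :
    ∑ i, ENNReal.ofReal (lam i) * klDiv (q i) (∑ j, ENNReal.ofReal (lam j) • q j)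
      ≤ ∑ i, ENNReal.ofReal (lam i) * klDiv (q i) r := by
  classical
  haveI := hr
  by_cases hR : (∑ i, ENNReal.ofReal (lam i) * klDiv (q i) r) = ⊤
  · rw [hR]; exact le_top
  set m : Measure Ω := ∑ j, ENNReal.ofReal (lam j) • q j with hm
  -- basic facts about zero weights
  have hzc : ∀ i : Fin n, ¬ 0 < lam i → ENNReal.ofReal (lam i) = 0 := fun i hi ↦
    ENNReal.ofReal_eq_zero.mpr (le_of_not_gt hi)
  -- finiteness instances
  haveI hmP : IsProbabilityMeasure m := by
    constructor
    rw [hm, Measure.finset_sum_apply]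
    simp only [Measure.smul_apply, smul_eq_mul, measure_univ, mul_one]
    rw [← ENNReal.ofReal_sum_of_nonneg (fun i _ ↦ hNonneg i), hSum, ENNReal.ofReal_one]
  -- conditions from finiteness of RHS
  have hterm : ∀ i, 0 < lam i → (q i ≪ r ∧ Integrable (llr (q i) r) (q i)) := by
    intro i hi
    by_contra hcon
    apply hR
    rw [ENNReal.sum_eq_top]
    refine ⟨i, Finset.mem_univ i, ?_⟩
    rw [klDiv, if_neg hcon, ENNReal.mul_top]
    simpa using (ENNReal.ofReal_pos.mpr hi).ne'
  -- absolute continuity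
  have hmr : m ≪ r := by
    refine Measure.AbsolutelyContinuous.mk fun s hs hs0 ↦ ?_
    rw [hm, Measure.finset_sum_apply]
    refine Finset.sum_eq_zero fun j _ ↦ ?_
    rw [Measure.smul_apply, smul_eq_mul]
    by_cases hj : 0 < lam j
    · rw [(hterm j hj).1 hs0, mul_zero]
    · rw [hzc j hj, zero_mul]
  have hqm : ∀ i, 0 < lam i → q i ≪ m := by
    intro i hi
    refine Measure.AbsolutelyContinuous.mk fun s hs hs0 ↦ ?_
    have hle : (ENNReal.ofReal (lam i) • q i) s ≤ m s := by
      rw [hm, Measure.finset_sum_apply]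
      exact Finset.single_le_sum (f := fun j ↦ (ENNReal.ofReal (lam j) • q j) s)
        (fun j _ ↦ zero_le) (Finset.mem_univ i)
    rw [hs0] at hle
    have h0 : (ENNReal.ofReal (lam i) • q i) s = 0 := le_antisymm hle zero_le
    rw [Measure.smul_apply, smul_eq_mul, mul_eq_zero] at h0
    exact h0.resolve_left (ENNReal.ofReal_pos.mpr hi).ne'
  -- the density of m as a sum
  have hg_sum : ∀ᵐ x ∂r, (m.rnDeriv r x).toReal
      = ∑ j, lam j * ((q j).rnDeriv r x).toReal := by
    have hsum1 := @rnDeriv_finset_sum_ae Ω (Fin n) _ Finset.univ (fun j ↦ ENNReal.ofReal (lam j) • q j) r inferInstance (fun j ↦ by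
      haveI := hq j
      exact ⟨by rw [Measure.smul_apply, smul_eq_mul]
                exact ENNReal.mul_lt_top ENNReal.ofReal_lt_top (measure_lt_top _ _)⟩)
    rw [← hm] at hsum1
    have hsum2 : ∀ᵐ x ∂r, ∀ j : Fin n,
        (ENNReal.ofReal (lam j) • q j).rnDeriv r x
          = ENNReal.ofReal (lam j) * (q j).rnDeriv r x := by
      rw [ae_all_iff]
      intro j
      haveI := hq j
      filter_upwards [Measure.rnDeriv_smul_left_of_ne_top (q j) r
        ENNReal.ofReal_ne_top] with x hx
      simpa using hx
    have hlt : ∀ᵐ x ∂r, ∀ j : Fin n, (q j).rnDeriv r x < ⊤ := by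
      rw [ae_all_iff]
      intro j
      haveI := hq j
      exact Measure.rnDeriv_lt_top (q j) r
    filter_upwards [hsum1, hsum2, hlt] with x h1 h2 h3
    rw [h1, ENNReal.toReal_sum (fun j _ ↦ by
      rw [h2 j]; exact (ENNReal.mul_lt_top ENNReal.ofReal_lt_top (h3 j)).ne)]
    refine Finset.sum_congr rfl fun j _ ↦ ?_
    rw [h2 j, ENNReal.toReal_mul, ENNReal.toReal_ofReal (hNonneg j)]
  -- integrability of f_j log f_j
  have hfl_int : ∀ j, 0 < lam j →
      Integrable (fun x ↦ ((q j).rnDeriv r x).toReal * Real.log (((q j).rnDeriv r x).toReal)) r := by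
    intro j hj
    haveI := hq j
    have h := (MeasureTheory.integrable_rnDeriv_smul_iff (hterm j hj).1).mpr (hterm j hj).2
    simpa [llr, smul_eq_mul] using h
  -- integrability of g log g
  have hbound_int : Integrable (fun x ↦
      (∑ j, lam j * |((q j).rnDeriv r x).toReal * Real.log (((q j).rnDeriv r x).toReal)|) + 1) r := by
    refine (integrable_finset_sum _ fun j _ ↦ ?_).add (integrable_const 1)
    by_cases hj : 0 < lam j
    · exact ((hfl_int j hj).abs.const_mul _)
    · have h0 : lam j = 0 := le_antisymm (le_of_not_gt hj) (hNonneg j)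
      simp only [h0, zero_mul]
      exact integrable_zero _ _ _
  have hφg_int : Integrable (fun x ↦ (m.rnDeriv r x).toReal * Real.log ((m.rnDeriv r x).toReal)) r := by
    refine Integrable.mono' hbound_int
      ((Measure.measurable_rnDeriv m r).ennreal_toReal.mul
        (Real.measurable_log.comp (Measure.measurable_rnDeriv m r).ennreal_toReal)).aestronglyMeasurable ?_
    filter_upwards [hg_sum] with x hx
    have hconv : (m.rnDeriv r x).toReal * Real.log ((m.rnDeriv r x).toReal)
        ≤ ∑ j, lam j * (((q j).rnDeriv r x).toReal * Real.log (((q j).rnDeriv r x).toReal)) := by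
      have h := (Real.convexOn_mul_log).map_sum_le (t := Finset.univ) (w := lam)
        (p := fun j ↦ ((q j).rnDeriv r x).toReal) (fun j _ ↦ hNonneg j) hSum
        (fun j _ ↦ ENNReal.toReal_nonneg)
      simpa [smul_eq_mul, ← hx] using h
    have habs : ∑ j, lam j * (((q j).rnDeriv r x).toReal * Real.log (((q j).rnDeriv r x).toReal))
        ≤ ∑ j, lam j * |((q j).rnDeriv r x).toReal * Real.log (((q j).rnDeriv r x).toReal)| :=
      Finset.sum_le_sum fun j _ ↦ mul_le_mul_of_nonneg_left (le_abs_self _) (hNonneg j)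
    have hs : 0 ≤ ∑ j, lam j * |((q j).rnDeriv r x).toReal * Real.log (((q j).rnDeriv r x).toReal)| :=
      Finset.sum_nonneg fun j _ ↦ mul_nonneg (hNonneg j) (abs_nonneg _)
    have hlow : (m.rnDeriv r x).toReal - 1
        ≤ (m.rnDeriv r x).toReal * Real.log ((m.rnDeriv r x).toReal) :=
      sub_one_le_mul_log ENNReal.toReal_nonneg
    have hgn : (0:ℝ) ≤ (m.rnDeriv r x).toReal := ENNReal.toReal_nonneg
    rw [Real.norm_eq_abs, abs_le]
    constructor
    · linarith
    · linarith
  -- integrability of llr m r with respect to m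
  have hllr_m_int : Integrable (llr m r) m := by
    refine (MeasureTheory.integrable_rnDeriv_smul_iff hmr).mp ?_
    simpa [llr, smul_eq_mul] using hφg_int
  -- integrability of llr m r with respect to q i
  have hllr_qi : ∀ i, 0 < lam i → Integrable (llr m r) (q i) := by
    intro i hi
    have h0 := hllr_m_int
    rw [hm] at h0
    have h1 := integrable_finset_sum_measure.mp h0 i (Finset.mem_univ i)
    rw [← hm] at h1
    exact (integrable_smul_measure (ENNReal.ofReal_pos.mpr hi).ne' ENNReal.ofReal_ne_top).mp h1
  -- chain rule
  have hchain : ∀ i, 0 < lam i →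
      llr (q i) m =ᵐ[q i] fun x ↦ llr (q i) r x - llr m r x := by
    intro i hi
    haveI := hq i
    have hqir := (hterm i hi).1
    have h1 : (q i).rnDeriv m * m.rnDeriv r =ᵐ[r] (q i).rnDeriv r :=
      Measure.rnDeriv_mul_rnDeriv (hqm i hi)
    filter_upwards [hqir.ae_le h1, Measure.rnDeriv_pos (hqm i hi),
      (hqm i hi).ae_le (Measure.rnDeriv_lt_top (q i) m),
      (hqm i hi).ae_le (Measure.rnDeriv_pos hmr),
      hqir.ae_le (Measure.rnDeriv_lt_top m r)] with x h1x h2x h3x h4x h5x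
    have ha : ((q i).rnDeriv m x).toReal ≠ 0 :=
      (ENNReal.toReal_pos h2x.ne' h3x.ne).ne'
    have hb : ((m.rnDeriv r) x).toReal ≠ 0 :=
      (ENNReal.toReal_pos h4x.ne' h5x.ne).ne'
    simp only [llr]
    rw [← h1x, Pi.mul_apply, ENNReal.toReal_mul, Real.log_mul ha hb]
    ring
  -- integrability of llr (q i) m
  have hllr_im : ∀ i, 0 < lam i → Integrable (llr (q i) m) (q i) := by
    intro i hi
    exact (Integrable.sub (hterm i hi).2 (hllr_qi i hi)).congr (hchain i hi).symm
  -- decomposition of the integral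
  have hint_eq : ∀ i, 0 < lam i →
      ∫ x, llr (q i) m x ∂(q i)
        = ∫ x, llr (q i) r x ∂(q i) - ∫ x, llr m r x ∂(q i) := by
    intro i hi
    rw [integral_congr_ae (hchain i hi)]
    exact integral_sub (hterm i hi).2 (hllr_qi i hi)
  -- nonnegativity of the integrals
  have hklm_nonneg : ∀ i, 0 < lam i → 0 ≤ ∫ x, llr (q i) m x ∂(q i) := by
    intro i hi
    haveI := hq i
    exact integral_llr_nonneg' (q i) m (hqm i hi) (hllr_im i hi)
  have hklr_nonneg : ∀ i, 0 < lam i → 0 ≤ ∫ x, llr (q i) r x ∂(q i) := by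
    intro i hi
    haveI := hq i
    exact integral_llr_nonneg' (q i) r (hterm i hi).1 (hterm i hi).2
  -- the weighted sum of ∫ llr m r dq i equals ∫ llr m r dm which is nonneg
  set S : Finset (Fin n) := Finset.univ.filter (fun i ↦ 0 < lam i) with hS
  have hmemS : ∀ i, i ∈ S ↔ 0 < lam i := by
    intro i; simp [hS]
  have hBsum : 0 ≤ ∑ i ∈ S, lam i * ∫ x, llr m r x ∂(q i) := by
    have h1 : ∫ x, llr m r x ∂(∑ j, ENNReal.ofReal (lam j) • q j)
        = ∑ j, ∫ x, llr m r x ∂(ENNReal.ofReal (lam j) • q j) := by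
      refine integral_finset_sum_measure fun j _ ↦ ?_
      by_cases hj : 0 < lam j
      · exact ((integrable_smul_measure (ENNReal.ofReal_pos.mpr hj).ne'
          ENNReal.ofReal_ne_top).mpr (hllr_qi j hj))
      · rw [hzc j hj, zero_smul]
        exact integrable_zero_measure
    rw [← hm] at h1
    have h2 : ∫ x, llr m r x ∂m = ∑ i ∈ S, lam i * ∫ x, llr m r x ∂(q i) := by
      rw [h1, ← Finset.sum_subset (Finset.subset_univ S) (fun j _ hj ↦ ?_)]
      · refine Finset.sum_congr rfl fun j hj ↦ ?_
        rw [integral_smul_measure, smul_eq_mul, ENNReal.toReal_ofReal (hNonneg j)]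
      · rw [hzc j (fun h ↦ hj ((hmemS j).mpr h)), zero_smul]
        exact integral_zero_measure _
    rw [← h2]
    exact integral_llr_nonneg' m r hmr hllr_m_int
  -- rewrite both sides as sums over S
  have hzm : ∀ i ∈ Finset.univ, i ∉ S → ENNReal.ofReal (lam i) * klDiv (q i) m = 0 := by
    intro i _ hi
    rw [hzc i (fun h ↦ hi ((hmemS i).mpr h)), zero_mul]
  have hzr : ∀ i ∈ Finset.univ, i ∉ S → ENNReal.ofReal (lam i) * klDiv (q i) r = 0 := by
    intro i _ hi
    rw [hzc i (fun h ↦ hi ((hmemS i).mpr h)), zero_mul]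
  rw [← Finset.sum_subset (Finset.subset_univ S) hzm,
    ← Finset.sum_subset (Finset.subset_univ S) hzr]
  -- compute the klDiv terms on S
  have hklm : ∀ i ∈ S, ENNReal.ofReal (lam i) * klDiv (q i) m
      = ENNReal.ofReal (lam i * ∫ x, llr (q i) m x ∂(q i)) := by
    intro i hi
    have hi' := (hmemS i).mp hi
    rw [klDiv, if_pos ⟨hqm i hi', hllr_im i hi'⟩, ← ENNReal.ofReal_mul (hNonneg i)]
  have hklr : ∀ i ∈ S, ENNReal.ofReal (lam i) * klDiv (q i) r
      = ENNReal.ofReal (lam i * ∫ x, llr (q i) r x ∂(q i)) := by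
    intro i hi
    have hi' := (hmemS i).mp hi
    rw [klDiv, if_pos ⟨(hterm i hi').1, (hterm i hi').2⟩, ← ENNReal.ofReal_mul (hNonneg i)]
  rw [Finset.sum_congr rfl hklm, Finset.sum_congr rfl hklr,
    ← ENNReal.ofReal_sum_of_nonneg (fun i hi ↦
      mul_nonneg (hNonneg i) (hklm_nonneg i ((hmemS i).mp hi))),
    ← ENNReal.ofReal_sum_of_nonneg (fun i hi ↦
      mul_nonneg (hNonneg i) (hklr_nonneg i ((hmemS i).mp hi)))]
  refine ENNReal.ofReal_le_ofReal ?_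
  have hsplit : ∑ i ∈ S, lam i * ∫ x, llr (q i) m x ∂(q i)
      = (∑ i ∈ S, lam i * ∫ x, llr (q i) r x ∂(q i))
        - ∑ i ∈ S, lam i * ∫ x, llr m r x ∂(q i) := by
    rw [← Finset.sum_sub_distrib]
    refine Finset.sum_congr rfl fun i hi ↦ ?_
    rw [hint_eq i ((hmemS i).mp hi)]
    ring
  rw [hsplit]
  linarith
end

section
/- Let Ω be a measurable space, n ≥ 1, λ ∈ Δ^n, and let q₁, …, q_n and q be probability measures on Ω. Let q̄ = Σ_{i=1}^n λ_i q_i. Then Σ_{i=1}^n λ_i · KL(q_i ‖ q) = Σ_{i=1}^n λ_i · KL(q_i ‖ q̄) + KL(q̄ ‖ q), where all terms are taken in the extended nonnegative reals [0, ∞]. -/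
open MeasureTheory
open scoped BigOperators ENNReal Classical

namespace CompensationAux

variable {α : Type*} [MeasurableSpace α] {μ ν : Measure α}

lemma ofReal_toReal_inv_le (a : ℝ≥0∞) : ENNReal.ofReal a.toReal⁻¹ ≤ a⁻¹ := by
  rcases eq_or_ne a ∞ with h | h
  · simp [h]
  rcases eq_or_ne a 0 with h0 | h0
  · simp [h0]
  rw [ENNReal.ofReal_inv_of_pos (ENNReal.toReal_pos h0 h), ENNReal.ofReal_toReal h]

lemma lintegral_inv_rnDeriv_le [IsProbabilityMeasure ν] [SigmaFinite μ] (hμν : μ ≪ ν) :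
    ∫⁻ x, (μ.rnDeriv ν x)⁻¹ ∂μ ≤ 1 := by
  rw [← lintegral_rnDeriv_mul hμν (show Measurable fun x => (μ.rnDeriv ν x)⁻¹ from (Measure.measurable_rnDeriv μ ν).inv).aemeasurable]
  calc ∫⁻ x, μ.rnDeriv ν x * (μ.rnDeriv ν x)⁻¹ ∂ν
      ≤ ∫⁻ _, 1 ∂ν := lintegral_mono fun x => ENNReal.mul_inv_le_one _
    _ = 1 := by simp

lemma lintegral_ofReal_neg_llr_le [IsProbabilityMeasure μ] [IsProbabilityMeasure ν]
    (hμν : μ ≪ ν) :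
    ∫⁻ x, ENNReal.ofReal (-(llr μ ν x)) ∂μ ≤ 1 := by
  refine le_trans (lintegral_mono_ae ?_)
    (le_trans (lintegral_mono fun x => ofReal_toReal_inv_le _) (lintegral_inv_rnDeriv_le hμν))
  filter_upwards [Measure.rnDeriv_pos hμν, hμν.ae_le (Measure.rnDeriv_lt_top μ ν)]
    with x h0 htop
  apply ENNReal.ofReal_le_ofReal
  have hs : 0 < (μ.rnDeriv ν x).toReal := ENNReal.toReal_pos h0.ne' htop.ne
  have h1 := Real.log_le_sub_one_of_pos (inv_pos.mpr hs)
  rw [Real.log_inv] at h1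
  have hl : llr μ ν x = Real.log (μ.rnDeriv ν x).toReal := rfl
  rw [hl]
  linarith

lemma integral_llr_nonneg [IsProbabilityMeasure μ] [IsProbabilityMeasure ν]
    (hμν : μ ≪ ν) (h : Integrable (llr μ ν) μ) : 0 ≤ ∫ x, llr μ ν x ∂μ := by
  set g : α → ℝ := fun x => Real.exp (-(llr μ ν x)) with hg
  have hg_eq : g =ᵐ[μ] fun x => (μ.rnDeriv ν x).toReal⁻¹ := by
    filter_upwards [Measure.rnDeriv_pos hμν, hμν.ae_le (Measure.rnDeriv_lt_top μ ν)]
      with x h0 htop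
    have hs : 0 < (μ.rnDeriv ν x).toReal := ENNReal.toReal_pos h0.ne' htop.ne
    have hl : llr μ ν x = Real.log (μ.rnDeriv ν x).toReal := rfl
    simp only [hg, hl, ← Real.log_inv, Real.exp_log (inv_pos.mpr hs)]
  have hg_nonneg : ∀ x, 0 ≤ g x := fun x => (Real.exp_pos _).le
  have hg_meas : AEStronglyMeasurable g μ :=
    (Real.measurable_exp.comp (measurable_llr μ ν).neg).aestronglyMeasurable
  have hg_lint : ∫⁻ x, ENNReal.ofReal (g x) ∂μ ≤ 1 := by
    calc ∫⁻ x, ENNReal.ofReal (g x) ∂μ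
        = ∫⁻ x, ENNReal.ofReal ((μ.rnDeriv ν x).toReal⁻¹) ∂μ :=
          lintegral_congr_ae (hg_eq.mono fun x hx => by dsimp only at hx ⊢; rw [hx])
      _ ≤ ∫⁻ x, (μ.rnDeriv ν x)⁻¹ ∂μ := lintegral_mono fun x => ofReal_toReal_inv_le _
      _ ≤ 1 := lintegral_inv_rnDeriv_le hμν
  have hg_int : Integrable g μ := by
    refine ⟨hg_meas, ?_⟩
    rw [hasFiniteIntegral_iff_norm]
    calc ∫⁻ x, ENNReal.ofReal ‖g x‖ ∂μ = ∫⁻ x, ENNReal.ofReal (g x) ∂μ := by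
          congr 1; ext x; rw [Real.norm_eq_abs, abs_of_nonneg (hg_nonneg x)]
      _ ≤ 1 := hg_lint
      _ < ∞ := ENNReal.one_lt_top
  have h_int_g : ∫ x, g x ∂μ ≤ 1 := by
    rw [integral_eq_lintegral_of_nonneg_ae (Filter.Eventually.of_forall hg_nonneg) hg_meas]
    calc (∫⁻ x, ENNReal.ofReal (g x) ∂μ).toReal ≤ (1 : ℝ≥0∞).toReal :=
          ENNReal.toReal_mono ENNReal.one_ne_top hg_lint
      _ = 1 := by simp
  have h_le : ∀ x, 1 - g x ≤ llr μ ν x := by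
    intro x
    have := Real.add_one_le_exp (-(llr μ ν x))
    simp only [hg]
    linarith
  have h_int_sub : Integrable (fun x => 1 - g x) μ := (integrable_const (1 : ℝ)).sub hg_int
  have hmono := integral_mono h_int_sub h h_le
  rw [integral_sub (integrable_const (1 : ℝ)) hg_int, integral_const] at hmono
  simp only [measure_univ, probReal_univ, ENNReal.toReal_one, smul_eq_mul, one_mul] at hmono
  linarith

lemma llr_decomp {ρ : Measure α} [IsFiniteMeasure μ] [IsFiniteMeasure ν] [IsFiniteMeasure ρ]
    (hμν : μ ≪ ν) (hνρ : ν ≪ ρ) :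
    llr μ ρ =ᵐ[μ] fun x => llr μ ν x + llr ν ρ x := by
  have h := Measure.rnDeriv_mul_rnDeriv (κ := ρ) hμν
  filter_upwards [(hμν.trans hνρ).ae_le h, Measure.rnDeriv_pos hμν,
    hμν.ae_le (Measure.rnDeriv_lt_top μ ν), hμν.ae_le (Measure.rnDeriv_pos hνρ),
    hμν.ae_le (hνρ.ae_le (Measure.rnDeriv_lt_top ν ρ))] with x hx h1 h2 h3 h4
  have e1 : (μ.rnDeriv ν x).toReal ≠ 0 := (ENNReal.toReal_pos h1.ne' h2.ne).ne'
  have e2 : (ν.rnDeriv ρ x).toReal ≠ 0 := (ENNReal.toReal_pos h3.ne' h4.ne).ne'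
  have ht : (μ.rnDeriv ρ x).toReal = (μ.rnDeriv ν x).toReal * (ν.rnDeriv ρ x).toReal := by
    rw [← ENNReal.toReal_mul, ← hx, Pi.mul_apply]
  show Real.log (μ.rnDeriv ρ x).toReal
      = Real.log (μ.rnDeriv ν x).toReal + Real.log (ν.rnDeriv ρ x).toReal
  rw [ht, Real.log_mul e1 e2]

lemma isFiniteMeasure_finset_sum {ι : Type*} (s : Finset ι) (μ : ι → Measure α)
    (h : ∀ i ∈ s, IsFiniteMeasure (μ i)) : IsFiniteMeasure (∑ i ∈ s, μ i) := by
  constructor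
  rw [Measure.finset_sum_apply]
  exact ENNReal.sum_lt_top.mpr fun i hi => @measure_lt_top _ _ _ (h i hi) _

lemma rnDeriv_finset_sum_smul {n : ℕ} (L : Fin n → ℝ≥0∞) (hL : ∀ i, L i ≠ ∞)
    (q : Fin n → Measure α) (hq : ∀ i, IsFiniteMeasure (q i)) (r : Measure α)
    [IsFiniteMeasure r] (s : Finset (Fin n)) :
    (∑ i ∈ s, L i • q i).rnDeriv r =ᵐ[r] fun x => ∑ i ∈ s, L i * (q i).rnDeriv r x := by
  haveI : SigmaFinite r := by infer_instance
  classical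
  have hsm : ∀ i, IsFiniteMeasure (L i • q i) := by
    intro i
    constructor
    rw [Measure.smul_apply, smul_eq_mul]
    exact ENNReal.mul_lt_top (hL i).lt_top (@measure_lt_top _ _ _ (hq i) _)
  induction s using Finset.induction_on with
  | empty =>
    rw [Finset.sum_empty]
    filter_upwards [Measure.rnDeriv_zero r] with x hx
    simpa using hx
  | @insert a s hnot ih =>
    haveI := hq a
    haveI := hsm a
    haveI := isFiniteMeasure_finset_sum s (fun i => L i • q i) (fun i _ => hsm i)
    rw [Finset.sum_insert hnot]
    have e1 := Measure.rnDeriv_add (L a • q a) (∑ i ∈ s, L i • q i) r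
    have e2 := Measure.rnDeriv_smul_left_of_ne_top (q a) r (hL a)
    filter_upwards [e1, e2, ih] with x h1 h2 h3
    rw [h1, Pi.add_apply, h2, Pi.smul_apply, smul_eq_mul, h3, Finset.sum_insert hnot]

lemma ofReal_mul_ofReal_log (s : ℝ) (hs : 0 ≤ s) :
    ENNReal.ofReal s * ENNReal.ofReal (Real.log s)
      = ENNReal.ofReal (max (s * Real.log s) 0) := by
  rcases le_or_gt 0 (Real.log s) with h | h
  · rw [← ENNReal.ofReal_mul hs, max_eq_left (mul_nonneg hs h)]
  · have hsl : s * Real.log s ≤ 0 := by nlinarith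
    rw [ENNReal.ofReal_of_nonpos h.le, mul_zero, max_eq_right hsl, ENNReal.ofReal_zero]

lemma convexOn_psi : ConvexOn ℝ (Set.Ici (0 : ℝ)) (fun t : ℝ => max (t * Real.log t) 0) := by
  have h := Real.convexOn_mul_log.sup (convexOn_const (0 : ℝ) (convex_Ici (0 : ℝ)))
  simpa [Pi.sup_def] using h

lemma klDiv_of (h1 : μ ≪ ν) (h2 : Integrable (llr μ ν) μ) :
    klDiv μ ν = ENNReal.ofReal (∫ x, llr μ ν x ∂μ) := by
  unfold klDiv; exact if_pos ⟨h1, h2⟩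

lemma klDiv_of_not (h : ¬(μ ≪ ν ∧ Integrable (llr μ ν) μ)) : klDiv μ ν = ∞ := by
  unfold klDiv; exact if_neg h

end CompensationAux

open CompensationAux

/-- compensation identity. For probability measures `q₁, …, q_n`, `q` on `Ω`
and `λ` in the simplex `Δ^n`, with `q̄ = Σ_i λ_i q_i`, one has
`Σ_i λ_i KL(q_i ‖ q) = Σ_i λ_i KL(q_i ‖ q̄) + KL(q̄ ‖ q)` in the extended nonnegative reals. -/
theorem compensation_identity_klDiv
    {Ω : Type*} [MeasurableSpace Ω] {n : ℕ} (hn : 1 ≤ n)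
    (lam : Fin n → ℝ) (hNonneg : ∀ i, 0 ≤ lam i) (hSum : (∑ i, lam i) = 1)
    (q : Fin n → Measure Ω) (hq : ∀ i, IsProbabilityMeasure (q i))
    (r : Measure Ω) (hr : IsProbabilityMeasure r) :
    ∑ i, ENNReal.ofReal (lam i) * klDiv (q i) r
      = (∑ i, ENNReal.ofReal (lam i) * klDiv (q i) (∑ j, ENNReal.ofReal (lam j) • q j))
        + klDiv (∑ j, ENNReal.ofReal (lam j) • q j) r := by
  set L : Fin n → ℝ≥0∞ := fun i => ENNReal.ofReal (lam i) with hLdef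
  set qbar : Measure Ω := ∑ j, L j • q j with hqbar
  have hL_ne_top : ∀ i, L i ≠ ∞ := fun i => ENNReal.ofReal_ne_top
  have hL_ne_zero : ∀ i, lam i ≠ 0 → L i ≠ 0 := by
    intro i hi
    simp only [hLdef, ne_eq, ENNReal.ofReal_eq_zero, not_le]
    exact lt_of_le_of_ne (hNonneg i) (Ne.symm hi)
  haveI hqi_fin : ∀ i, IsFiniteMeasure (q i) := fun i => have := hq i; inferInstance
  haveI hqbar_prob : IsProbabilityMeasure qbar := by
    constructor
    rw [hqbar, Measure.finset_sum_apply]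
    have : ∀ j, (L j • q j) Set.univ = L j := by
      intro j
      haveI := hq j
      rw [Measure.smul_apply, smul_eq_mul, measure_univ, mul_one]
    simp only [this]
    simp only [hLdef]
    rw [← ENNReal.ofReal_sum_of_nonneg fun i _ => hNonneg i, hSum, ENNReal.ofReal_one]
  have h_le : ∀ i, L i • q i ≤ qbar := by
    intro i
    rw [Measure.le_iff']
    intro s
    rw [hqbar, Measure.finset_sum_apply]
    exact Finset.single_le_sum (f := fun j => (L j • q j) s) (fun j _ => zero_le)
      (Finset.mem_univ i)
  have h_ac_i : ∀ i, lam i ≠ 0 → q i ≪ qbar := by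
    intro i hi
    refine Measure.AbsolutelyContinuous.mk fun s _ h0 => ?_
    have h1 : (L i • q i) s ≤ qbar s := Measure.le_iff'.mp (h_le i) s
    rw [h0, Measure.smul_apply, smul_eq_mul, nonpos_iff_eq_zero] at h1
    rcases mul_eq_zero.mp h1 with h | h
    · exact absurd h (hL_ne_zero i hi)
    · exact h
  have h_int_of_bar : ∀ (h : Ω → ℝ) i, lam i ≠ 0 → Integrable h qbar → Integrable h (q i) := by
    intro h i hi hint
    refine (hint.smul_measure (c := (L i)⁻¹) (ENNReal.inv_ne_top.mpr (hL_ne_zero i hi))).mono_measure ?_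
    rw [Measure.le_iff']
    intro s
    have h1 : (L i • q i) s ≤ qbar s := Measure.le_iff'.mp (h_le i) s
    rw [Measure.smul_apply, smul_eq_mul] at h1
    rw [Measure.smul_apply, smul_eq_mul]
    calc q i s = (L i)⁻¹ * (L i * q i s) := by
          rw [← mul_assoc, ENNReal.inv_mul_cancel (hL_ne_zero i hi) (hL_ne_top i), one_mul]
      _ ≤ (L i)⁻¹ * qbar s := mul_le_mul_right h1 _
  by_cases hfin : ∀ i, lam i ≠ 0 → q i ≪ r ∧ Integrable (llr (q i) r) (q i)
  · -- all individual divergences finite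
    have h_ac_bar : qbar ≪ r := by
      refine Measure.AbsolutelyContinuous.mk fun s hs h0 => ?_
      rw [hqbar, Measure.finset_sum_apply]
      refine Finset.sum_eq_zero fun i _ => ?_
      rw [Measure.smul_apply, smul_eq_mul]
      rcases eq_or_ne (lam i) 0 with h | h
      · simp [hLdef, h]
      · rw [(hfin i h).1 h0, mul_zero]
    -- Integrability of `llr qbar r` w.r.t. `qbar`
    have h_meas_ofReal : ∀ (μ ν : Measure Ω),
        Measurable fun x => ENNReal.ofReal (llr μ ν x) :=
      fun μ ν => ENNReal.measurable_ofReal.comp (measurable_llr μ ν)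
    have h_pos_part : ∫⁻ x, ENNReal.ofReal (llr qbar r x) ∂qbar
        ≤ ∑ i, L i * ∫⁻ x, ENNReal.ofReal (llr (q i) r x) ∂(q i) := by
      rw [← lintegral_rnDeriv_mul h_ac_bar (h_meas_ofReal qbar r).aemeasurable]
      have hptwise : ∀ᵐ x ∂r, qbar.rnDeriv r x * ENNReal.ofReal (llr qbar r x)
          ≤ ∑ i, L i * ((q i).rnDeriv r x * ENNReal.ofReal (llr (q i) r x)) := by
        filter_upwards [rnDeriv_finset_sum_smul L hL_ne_top q hqi_fin r Finset.univ,
          Measure.rnDeriv_lt_top qbar r,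
          ae_all_iff.mpr (fun i => Measure.rnDeriv_lt_top (q i) r)] with x hx hxt hfx
        have hsum_toReal : (qbar.rnDeriv r x).toReal
            = ∑ i, lam i * ((q i).rnDeriv r x).toReal := by
          rw [hqbar, hx]
          rw [ENNReal.toReal_sum fun i _ =>
            ENNReal.mul_ne_top (hL_ne_top i) (hfx i).ne]
          refine Finset.sum_congr rfl fun i _ => ?_
          rw [ENNReal.toReal_mul, hLdef, ENNReal.toReal_ofReal (hNonneg i)]
        have hl : llr qbar r x = Real.log (qbar.rnDeriv r x).toReal := rfl
        calc qbar.rnDeriv r x * ENNReal.ofReal (llr qbar r x)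
            = ENNReal.ofReal (max ((qbar.rnDeriv r x).toReal
                * Real.log (qbar.rnDeriv r x).toReal) 0) := by
              rw [hl]
              have h := ofReal_mul_ofReal_log (qbar.rnDeriv r x).toReal ENNReal.toReal_nonneg
              rwa [ENNReal.ofReal_toReal hxt.ne] at h
          _ ≤ ENNReal.ofReal (∑ i, lam i
                * max (((q i).rnDeriv r x).toReal * Real.log (((q i).rnDeriv r x).toReal)) 0) := by
              apply ENNReal.ofReal_le_ofReal
              rw [hsum_toReal]
              have := convexOn_psi.map_sum_le (t := Finset.univ) (w := lam)
                (p := fun i => ((q i).rnDeriv r x).toReal)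
                (fun i _ => hNonneg i) hSum (fun i _ => ENNReal.toReal_nonneg)
              simpa [smul_eq_mul] using this
          _ = ∑ i, ENNReal.ofReal (lam i
                * max (((q i).rnDeriv r x).toReal * Real.log (((q i).rnDeriv r x).toReal)) 0) :=
              ENNReal.ofReal_sum_of_nonneg fun i _ =>
                mul_nonneg (hNonneg i) (le_max_right _ _)
          _ ≤ ∑ i, L i * ((q i).rnDeriv r x * ENNReal.ofReal (llr (q i) r x)) := by
              refine Finset.sum_le_sum fun i _ => ?_
              rw [ENNReal.ofReal_mul (hNonneg i)]
              refine mul_le_mul_right (le_of_eq ?_) _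
              have hli : llr (q i) r x = Real.log (((q i).rnDeriv r x).toReal) := rfl
              rw [hli, ← ofReal_mul_ofReal_log _ ENNReal.toReal_nonneg,
                ENNReal.ofReal_toReal (hfx i).ne]
      calc ∫⁻ x, qbar.rnDeriv r x * ENNReal.ofReal (llr qbar r x) ∂r
          ≤ ∫⁻ x, ∑ i, L i * ((q i).rnDeriv r x * ENNReal.ofReal (llr (q i) r x)) ∂r :=
            lintegral_mono_ae hptwise
        _ = ∑ i, L i * ∫⁻ x, (q i).rnDeriv r x * ENNReal.ofReal (llr (q i) r x) ∂r := by
            rw [lintegral_finset_sum _ fun i _ => (show Measurable fun x => L i * ((q i).rnDeriv r x * ENNReal.ofReal (llr (q i) r x)) from Measurable.const_mul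
              ((Measure.measurable_rnDeriv (q i) r).mul (h_meas_ofReal (q i) r)) _)]
            exact Finset.sum_congr rfl fun i _ => lintegral_const_mul _
              ((Measure.measurable_rnDeriv (q i) r).mul (h_meas_ofReal (q i) r))
        _ ≤ ∑ i, L i * ∫⁻ x, ENNReal.ofReal (llr (q i) r x) ∂(q i) := by
            refine Finset.sum_le_sum fun i _ => ?_
            rcases eq_or_ne (lam i) 0 with h | h
            · simp [hLdef, h]
            · rw [lintegral_rnDeriv_mul (hfin i h).1 (h_meas_ofReal (q i) r).aemeasurable]
    have h_abs_split : ∀ t : ℝ, ENNReal.ofReal ‖t‖ ≤ ENNReal.ofReal t + ENNReal.ofReal (-t) := by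
      intro t
      rcases le_total 0 t with h | h
      · rw [Real.norm_eq_abs, abs_of_nonneg h]; exact le_self_add
      · rw [Real.norm_eq_abs, abs_of_nonpos h]; exact le_add_self
    have h_int_bar : Integrable (llr qbar r) qbar := by
      refine ⟨(measurable_llr qbar r).aestronglyMeasurable, ?_⟩
      rw [hasFiniteIntegral_iff_norm]
      have hb1 : ∫⁻ x, ENNReal.ofReal (llr qbar r x) ∂qbar < ∞ := by
        refine lt_of_le_of_lt h_pos_part (ENNReal.sum_lt_top.mpr fun i _ => ?_)
        rcases eq_or_ne (lam i) 0 with h | h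
        · simp [hLdef, h]
        · refine ENNReal.mul_lt_top (hL_ne_top i).lt_top ?_
          have := (hfin i h).2.2
          rw [hasFiniteIntegral_iff_norm] at this
          refine lt_of_le_of_lt (lintegral_mono fun x => ?_) this
          exact ENNReal.ofReal_le_ofReal (le_abs_self _)
      have hb2 : ∫⁻ x, ENNReal.ofReal (-(llr qbar r x)) ∂qbar ≤ 1 :=
        lintegral_ofReal_neg_llr_le h_ac_bar
      calc ∫⁻ x, ENNReal.ofReal ‖llr qbar r x‖ ∂qbar
          ≤ ∫⁻ x, (ENNReal.ofReal (llr qbar r x) + ENNReal.ofReal (-(llr qbar r x))) ∂qbar :=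
            lintegral_mono fun x => h_abs_split _
        _ = (∫⁻ x, ENNReal.ofReal (llr qbar r x) ∂qbar)
              + ∫⁻ x, ENNReal.ofReal (-(llr qbar r x)) ∂qbar :=
            lintegral_add_left (h_meas_ofReal qbar r) _
        _ < ∞ := ENNReal.add_lt_top.mpr
            ⟨hb1, lt_of_le_of_lt hb2 ENNReal.one_lt_top⟩
    -- integrability of `llr (q i) qbar` for `lam i ≠ 0`
    have h_decomp : ∀ i, lam i ≠ 0 →
        llr (q i) r =ᵐ[q i] fun x => llr (q i) qbar x + llr qbar r x := by
      intro i hi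
      haveI := hq i
      exact llr_decomp (h_ac_i i hi) h_ac_bar
    have h_int_i : ∀ i, lam i ≠ 0 → Integrable (llr (q i) qbar) (q i) := by
      intro i hi
      have h1 : Integrable (fun x => llr (q i) r x - llr qbar r x) (q i) :=
        (hfin i hi).2.sub (h_int_of_bar _ i hi h_int_bar)
      refine h1.congr ?_
      filter_upwards [h_decomp i hi] with x hx
      rw [hx]
      ring
    -- the real-valued quantities and their nonnegativity
    have hA_nonneg : ∀ i, lam i ≠ 0 → 0 ≤ ∫ x, llr (q i) r x ∂(q i) := by
      intro i hi; haveI := hq i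
      exact integral_llr_nonneg (hfin i hi).1 (hfin i hi).2
    have hB_nonneg : ∀ i, lam i ≠ 0 → 0 ≤ ∫ x, llr (q i) qbar x ∂(q i) := by
      intro i hi; haveI := hq i
      exact integral_llr_nonneg (h_ac_i i hi) (h_int_i i hi)
    have hC_nonneg : 0 ≤ ∫ x, llr qbar r x ∂qbar := integral_llr_nonneg h_ac_bar h_int_bar
    have hkey1 : ∀ i, lam i ≠ 0 → ∫ x, llr (q i) r x ∂(q i)
        = (∫ x, llr (q i) qbar x ∂(q i)) + ∫ x, llr qbar r x ∂(q i) := by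
      intro i hi
      haveI := hq i
      calc ∫ x, llr (q i) r x ∂(q i)
          = ∫ x, (llr (q i) qbar x + llr qbar r x) ∂(q i) :=
            integral_congr_ae (h_decomp i hi)
        _ = (∫ x, llr (q i) qbar x ∂(q i)) + ∫ x, llr qbar r x ∂(q i) :=
            integral_add (h_int_i i hi) (h_int_of_bar _ i hi h_int_bar)
    have hkey2 : ∫ x, llr qbar r x ∂qbar = ∑ i, lam i * ∫ x, llr qbar r x ∂(q i) := by
      rw [show ∫ x, llr qbar r x ∂qbar = ∫ x, llr qbar r x ∂(∑ j, L j • q j) from rfl]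
      rw [integral_finset_sum_measure (fun i _ => ?_)]
      · refine Finset.sum_congr rfl fun i _ => ?_
        rw [integral_smul_measure, hLdef, ENNReal.toReal_ofReal (hNonneg i), smul_eq_mul]
      · rcases eq_or_ne (lam i) 0 with h | h
        · have hLi : L i = 0 := by simp [hLdef, h]
          rw [hLi, zero_smul]
          exact integrable_zero_measure
        · exact (h_int_of_bar _ i h h_int_bar).smul_measure (hL_ne_top i)
    -- assemble everything in ℝ≥0∞
    have hLHS : ∑ i, ENNReal.ofReal (lam i) * klDiv (q i) r
        = ENNReal.ofReal (∑ i, lam i * ∫ x, llr (q i) r x ∂(q i)) := by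
      rw [ENNReal.ofReal_sum_of_nonneg (fun i _ => ?_)]
      · refine Finset.sum_congr rfl fun i _ => ?_
        rcases eq_or_ne (lam i) 0 with h | h
        · simp [h]
        · rw [klDiv_of (hfin i h).1 (hfin i h).2, ENNReal.ofReal_mul (hNonneg i)]
      · rcases eq_or_ne (lam i) 0 with h | h
        · simp [h]
        · exact mul_nonneg (hNonneg i) (hA_nonneg i h)
    have hMID : ∑ i, ENNReal.ofReal (lam i) * klDiv (q i) qbar
        = ENNReal.ofReal (∑ i, lam i * ∫ x, llr (q i) qbar x ∂(q i)) := by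
      rw [ENNReal.ofReal_sum_of_nonneg (fun i _ => ?_)]
      · refine Finset.sum_congr rfl fun i _ => ?_
        rcases eq_or_ne (lam i) 0 with h | h
        · simp [h]
        · rw [klDiv_of (h_ac_i i h) (h_int_i i h), ENNReal.ofReal_mul (hNonneg i)]
      · rcases eq_or_ne (lam i) 0 with h | h
        · simp [h]
        · exact mul_nonneg (hNonneg i) (hB_nonneg i h)
    have hKL_bar : klDiv qbar r = ENNReal.ofReal (∫ x, llr qbar r x ∂qbar) :=
      klDiv_of h_ac_bar h_int_bar
    have hreal : ∑ i, lam i * ∫ x, llr (q i) r x ∂(q i)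
        = (∑ i, lam i * ∫ x, llr (q i) qbar x ∂(q i)) + ∫ x, llr qbar r x ∂qbar := by
      rw [hkey2, ← Finset.sum_add_distrib]
      refine Finset.sum_congr rfl fun i _ => ?_
      rcases eq_or_ne (lam i) 0 with h | h
      · simp [h]
      · rw [hkey1 i h, mul_add]
    rw [hLHS, hMID, hKL_bar, ← ENNReal.ofReal_add
      (Finset.sum_nonneg fun i _ => ?_) hC_nonneg, hreal]
    rcases eq_or_ne (lam i) 0 with h | h
    · simp [h]
    · exact mul_nonneg (hNonneg i) (hB_nonneg i h)
  · -- some individual divergence is infinite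
    push_neg at hfin
    obtain ⟨i, hi, hcond⟩ := hfin
    have hKLi : klDiv (q i) r = ∞ :=
      klDiv_of_not fun hc => hcond hc.1 hc.2
    have hLHS : ∑ j, ENNReal.ofReal (lam j) * klDiv (q j) r = ∞ := by
      refine ENNReal.sum_eq_top.mpr ⟨i, Finset.mem_univ i, ?_⟩
      rw [hKLi, ENNReal.mul_top (hL_ne_zero i hi)]
    rw [hLHS]
    symm
    by_contra hne
    have h1 : klDiv qbar r ≠ ∞ := by
      intro h
      exact hne (by rw [h, add_top])
    have h2 : klDiv (q i) qbar ≠ ∞ := by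
      intro h
      refine hne ?_
      have : ∑ j, ENNReal.ofReal (lam j) * klDiv (q j) qbar = ∞ :=
        ENNReal.sum_eq_top.mpr ⟨i, Finset.mem_univ i,
          by rw [h, ENNReal.mul_top (hL_ne_zero i hi)]⟩
      rw [this, top_add]
    have hc1 : qbar ≪ r ∧ Integrable (llr qbar r) qbar := by
      by_contra hc
      exact h1 (klDiv_of_not hc)
    have hc2 : q i ≪ qbar ∧ Integrable (llr (q i) qbar) (q i) := by
      by_contra hc
      exact h2 (klDiv_of_not hc)
    have hacir : q i ≪ r := (h_ac_i i hi).trans hc1.1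
    have hint : Integrable (llr (q i) r) (q i) := by
      haveI := hq i
      have hdec := llr_decomp (h_ac_i i hi) hc1.1
      exact (hc2.2.add (h_int_of_bar _ i hi hc1.2)).congr hdec.symm
    exact hcond hacir hint
end

section
/- Let X be a measurable space with a σ-finite measure ν, P a nonempty finite index set, and for each p ∈ P let μ_p be a probability measure on X with μ_p ≪ ν and density g_p = dμ_p/dν. Fix λ ∈ Δ^P. Then for every measurable f : X → [0, ∞) with ∫ f dν = 1, Σ_{p∈P} λ_p ∫ (−log f(x)) dμ_p(x) ≥ Σ_{p∈P} λ_p ∫ (−log Σ_{q∈P} λ_q g_q(x)) dμ_p(x), where both sides are interpreted in the extended reals. -/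
open MeasureTheory
open scoped BigOperators ENNReal Classical

/-- The integral `∫ (−log f) dμ`, interpreted in the extended reals: it is the difference of the
lower integral of the positive part of `−log f` (which is `+∞` at points where `f = 0`) and the
lower integral of its negative part. -/
noncomputable def negLogIntegral {X : Type*} [MeasurableSpace X]
    (μ : Measure X) (f : X → ℝ) : EReal :=
  ((∫⁻ x, (if f x = 0 then ∞ else ENNReal.ofReal (-Real.log (f x))) ∂μ : ℝ≥0∞) : EReal)
    - ((∫⁻ x, ENNReal.ofReal (Real.log (f x)) ∂μ : ℝ≥0∞) : EReal)

lemma aux_ereal_sub_add_sub (a1 b1 a2 b2 : ℝ≥0∞) :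
    ((a1:EReal) - b1) + ((a2:EReal) - b2) = ((a1+a2 : ℝ≥0∞):EReal) - ((b1+b2 : ℝ≥0∞):EReal) := by
  induction b1 using ENNReal.recTopCoe with
  | top => simp [sub_eq_add_neg]
  | coe b1 =>
  induction b2 using ENNReal.recTopCoe with
  | top => simp [sub_eq_add_neg]
  | coe b2 =>
  rw [← ENNReal.coe_add, EReal.coe_nnreal_eq_coe_real b1, EReal.coe_nnreal_eq_coe_real b2,
    EReal.coe_nnreal_eq_coe_real (b1 + b2), NNReal.coe_add]
  induction a1 using ENNReal.recTopCoe with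
  | top =>
    rw [top_add, EReal.coe_ennreal_top, EReal.top_sub_coe, EReal.top_sub_coe]
    rw [EReal.top_add_of_ne_bot]
    induction a2 using ENNReal.recTopCoe with
    | top => simp [EReal.top_sub_coe]
    | coe a2 =>
      rw [EReal.coe_nnreal_eq_coe_real, ← EReal.coe_sub]; exact EReal.coe_ne_bot _
  | coe a1 =>
  rw [EReal.coe_nnreal_eq_coe_real a1]
  induction a2 using ENNReal.recTopCoe with
  | top =>
    rw [add_top, EReal.coe_ennreal_top, EReal.top_sub_coe,
      sub_eq_add_neg ((a1:ℝ):EReal), ← EReal.coe_neg, ← EReal.coe_add, EReal.coe_add_top,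
      EReal.top_sub_coe]
  | coe a2 =>
  rw [EReal.coe_nnreal_eq_coe_real a2, ← ENNReal.coe_add, EReal.coe_nnreal_eq_coe_real,
    NNReal.coe_add, ← EReal.coe_sub, ← EReal.coe_sub, ← EReal.coe_add, ← EReal.coe_sub,
    EReal.coe_eq_coe_iff]
  ring

lemma aux_ereal_mul_sub (c : ℝ) (hc : 0 ≤ c) (a b : ℝ≥0∞) :
    (c:EReal) * ((a:EReal) - b)
      = ((ENNReal.ofReal c * a : ℝ≥0∞):EReal) - ((ENNReal.ofReal c * b : ℝ≥0∞):EReal) := by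
  rcases eq_or_lt_of_le hc with h0 | hpos
  · simp [← h0]
  have hc0 : ENNReal.ofReal c ≠ 0 := by simp [hpos]
  induction b using ENNReal.recTopCoe with
  | top =>
    rw [ENNReal.mul_top hc0]
    simp only [sub_eq_add_neg, EReal.coe_ennreal_top, EReal.neg_top]
    rw [EReal.add_bot, EReal.add_bot, EReal.coe_mul_bot_of_pos hpos]
  | coe b =>
  have hb : ((ENNReal.ofReal c * b : ℝ≥0∞) : EReal) = ((c * b : ℝ) : EReal) := by
    rw [← ENNReal.ofReal_coe_nnreal, ← ENNReal.ofReal_mul hc]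
    rw [EReal.coe_ennreal_ofReal, max_eq_left (by positivity)]
  induction a using ENNReal.recTopCoe with
  | top =>
    rw [ENNReal.mul_top hc0, EReal.coe_ennreal_top, EReal.coe_nnreal_eq_coe_real,
      EReal.top_sub_coe, EReal.coe_mul_top_of_pos hpos, hb, EReal.top_sub_coe]
  | coe a =>
    have ha : ((ENNReal.ofReal c * a : ℝ≥0∞) : EReal) = ((c * a : ℝ) : EReal) := by
      rw [← ENNReal.ofReal_coe_nnreal, ← ENNReal.ofReal_mul hc]
      rw [EReal.coe_ennreal_ofReal, max_eq_left (by positivity)]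
    rw [ha, hb, EReal.coe_nnreal_eq_coe_real, EReal.coe_nnreal_eq_coe_real,
      ← EReal.coe_sub, ← EReal.coe_mul, ← EReal.coe_sub, EReal.coe_eq_coe_iff]
    ring

lemma aux_sum_mul_sub {P : Type*} (s : Finset P) (c : P → ℝ) (hc : ∀ p, 0 ≤ c p)
    (a b : P → ℝ≥0∞) :
    ∑ p ∈ s, (c p : EReal) * ((a p : EReal) - (b p : EReal))
      = ((∑ p ∈ s, ENNReal.ofReal (c p) * a p : ℝ≥0∞) : EReal)
        - ((∑ p ∈ s, ENNReal.ofReal (c p) * b p : ℝ≥0∞) : EReal) := by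
  induction s using Finset.induction with
  | empty => simp
  | @insert p s hp ih =>
    rw [Finset.sum_insert hp, Finset.sum_insert hp, Finset.sum_insert hp, ih,
      aux_ereal_mul_sub _ (hc _), aux_ereal_sub_add_sub]

lemma aux_ofReal_max (u : ℝ) : ENNReal.ofReal u = ENNReal.ofReal (max u 0) := by
  rcases le_total u 0 with h | h
  · rw [max_eq_right h, ENNReal.ofReal_eq_zero.2 h, ENNReal.ofReal_zero]
  · rw [max_eq_left h]

lemma aux_pointwise (a b : ℝ) (ha : 0 ≤ a) (hb : 0 < b) :
    (if b = 0 then (⊤:ℝ≥0∞) else ENNReal.ofReal (-Real.log b)) + ENNReal.ofReal (Real.log a) + 1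
      ≤ (if a = 0 then (⊤:ℝ≥0∞) else ENNReal.ofReal (-Real.log a)) + ENNReal.ofReal (Real.log b)
        + ENNReal.ofReal (a / b) := by
  rw [if_neg hb.ne']
  rcases eq_or_lt_of_le ha with h0 | hapos
  · rw [if_pos h0.symm, top_add, top_add]; exact le_top
  · rw [if_neg hapos.ne']
    have hab : 0 < a / b := div_pos hapos hb
    have key : Real.log a - Real.log b ≤ a / b - 1 := by
      have := Real.log_le_sub_one_of_pos hab
      rwa [Real.log_div hapos.ne' hb.ne'] at this
    rw [aux_ofReal_max (-Real.log b), aux_ofReal_max (Real.log a),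
        aux_ofReal_max (-Real.log a), aux_ofReal_max (Real.log b), ← ENNReal.ofReal_one,
        ← ENNReal.ofReal_add (le_max_right _ _) (le_max_right _ _),
        ← ENNReal.ofReal_add (by positivity) zero_le_one,
        ← ENNReal.ofReal_add (le_max_right _ _) (le_max_right _ _),
        ← ENNReal.ofReal_add (by positivity) hab.le]
    apply ENNReal.ofReal_le_ofReal
    have h1 := max_zero_sub_max_neg_zero_eq_self (Real.log a)
    have h2 := max_zero_sub_max_neg_zero_eq_self (Real.log b)
    linarith

lemma aux_log_le (a b : ℝ) (ha : 0 ≤ a) (hb : 0 < b) :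
    ENNReal.ofReal (Real.log a)
      ≤ ENNReal.ofReal (Real.log b) + ENNReal.ofReal (a / b) := by
  rcases eq_or_lt_of_le ha with h0 | hapos
  · rw [← h0, Real.log_zero, ENNReal.ofReal_zero]; exact zero_le
  · have hab : 0 < a / b := div_pos hapos hb
    have key : Real.log a - Real.log b ≤ a / b - 1 := by
      have := Real.log_le_sub_one_of_pos hab
      rwa [Real.log_div hapos.ne' hb.ne'] at this
    calc ENNReal.ofReal (Real.log a) ≤ ENNReal.ofReal (Real.log b + a / b) :=
          ENNReal.ofReal_le_ofReal (by linarith)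
      _ ≤ _ := ENNReal.ofReal_add_le

/-- Let `ν` be σ-finite on `X` and let each source `μ p` be a probability
measure with density `g p ≥ 0` w.r.t. `ν`. Fix `λ` in the simplex `Δ^P`. Then for every
measurable probability density `f ≥ 0` (`∫ f dν = 1`), the `λ`-weighted unconditional
cross-entropy of `f` is at least that of the mixture density `x ↦ Σ_q λ_q g_q(x)`:
`Σ_p λ_p ∫ (−log f) dμ_p ≥ Σ_p λ_p ∫ (−log Σ_q λ_q g_q) dμ_p`, in the extended reals. -/
theorem mixture_density_minimizes_weighted_cross_entropy
    {X : Type*} [MeasurableSpace X] (ν : Measure X) [SigmaFinite ν]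
    {P : Type*} [Fintype P] [Nonempty P]
    (μ : P → Measure X) (hProb : ∀ p, IsProbabilityMeasure (μ p))
    (g : P → X → ℝ) (hgMeas : ∀ p, Measurable (g p)) (hgNonneg : ∀ p x, 0 ≤ g p x)
    (hDens : ∀ p, μ p = ν.withDensity (fun x => ENNReal.ofReal (g p x)))
    (lam : P → ℝ) (hNonneg : ∀ p, 0 ≤ lam p) (hSum : (∑ p, lam p) = 1)
    (f : X → ℝ) (hfMeas : Measurable f) (hfNonneg : ∀ x, 0 ≤ f x)
    (hfDens : ∫⁻ x, ENNReal.ofReal (f x) ∂ν = 1) :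
    ∑ p, (lam p : EReal) * negLogIntegral (μ p) (fun x => ∑ q, lam q * g q x)
      ≤ ∑ p, (lam p : EReal) * negLogIntegral (μ p) f := by
  classical
  set m : X → ℝ := fun x => ∑ q, lam q * g q x with hm
  have hmMeas : Measurable m :=
    Finset.measurable_sum _ fun q _ => (hgMeas q).const_mul (lam q)
  have hmNonneg : ∀ x, 0 ≤ m x := fun x =>
    Finset.sum_nonneg fun q _ => mul_nonneg (hNonneg q) (hgNonneg q x)
  set dm : X → ℝ≥0∞ := fun x => ENNReal.ofReal (m x) with hdm
  have hdmMeas : Measurable dm := hmMeas.ennreal_ofReal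
  have hdm_sum : ∀ x, dm x = ∑ p, ENNReal.ofReal (lam p) * ENNReal.ofReal (g p x) := by
    intro x
    rw [hdm]
    simp only [hm]
    rw [ENNReal.ofReal_sum_of_nonneg fun q _ => mul_nonneg (hNonneg q) (hgNonneg q x)]
    exact Finset.sum_congr rfl fun q _ => ENNReal.ofReal_mul (hNonneg q)
  set μmix := ν.withDensity dm with hμmix
  have hdec : ∀ h : X → ℝ≥0∞, Measurable h →
      ∑ p, ENNReal.ofReal (lam p) * ∫⁻ x, h x ∂(μ p) = ∫⁻ x, h x ∂μmix := by
    intro h hh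
    rw [hμmix, lintegral_withDensity_eq_lintegral_mul ν hdmMeas hh]
    have hpt : ∀ x, (dm * h) x = ∑ p, ENNReal.ofReal (lam p) * (ENNReal.ofReal (g p x) * h x) := by
      intro x
      simp only [Pi.mul_apply, hdm_sum x, Finset.sum_mul, mul_assoc]
    rw [lintegral_congr hpt,
      lintegral_finset_sum (f := fun p x => ENNReal.ofReal (lam p) * (ENNReal.ofReal (g p x) * h x))
        Finset.univ (fun p _ => (((hgMeas p).ennreal_ofReal).mul hh).const_mul _)]
    refine Finset.sum_congr rfl fun p _ => ?_
    rw [lintegral_const_mul (f := fun x => ENNReal.ofReal (g p x) * h x) _ (((hgMeas p).ennreal_ofReal).mul hh),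
      hDens p, lintegral_withDensity_eq_lintegral_mul ν ((hgMeas p).ennreal_ofReal) hh]
    rfl
  have hg1 : ∀ p, ∫⁻ x, ENNReal.ofReal (g p x) ∂ν = 1 := by
    intro p
    have h1 : (μ p) Set.univ = 1 := (hProb p).measure_univ
    rwa [hDens p, withDensity_apply _ MeasurableSet.univ, setLIntegral_univ] at h1
  have hμmix_univ : μmix Set.univ = 1 := by
    rw [hμmix, withDensity_apply _ MeasurableSet.univ, setLIntegral_univ]
    calc ∫⁻ x, dm x ∂ν = ∑ p, ENNReal.ofReal (lam p) * ∫⁻ x, ENNReal.ofReal (g p x) ∂ν := by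
          rw [lintegral_congr hdm_sum,
            lintegral_finset_sum (f := fun p x => ENNReal.ofReal (lam p) * ENNReal.ofReal (g p x))
              Finset.univ (fun p _ => ((hgMeas p).ennreal_ofReal).const_mul _)]
          exact Finset.sum_congr rfl fun p _ =>
            lintegral_const_mul _ ((hgMeas p).ennreal_ofReal)
      _ = ∑ p, ENNReal.ofReal (lam p) := by simp [hg1]
      _ = ENNReal.ofReal (∑ p, lam p) := (ENNReal.ofReal_sum_of_nonneg fun p _ => hNonneg p).symm
      _ = 1 := by rw [hSum, ENNReal.ofReal_one]
  have hm0set : MeasurableSet {x | m x = 0} := hmMeas (measurableSet_singleton 0)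
  have hm0 : μmix {x | m x = 0} = 0 := by
    rw [hμmix, withDensity_apply _ hm0set]
    have hz : ∀ᵐ x ∂ν, x ∈ {x | m x = 0} → dm x = (fun _ => (0:ℝ≥0∞)) x :=
      ae_of_all _ fun x hx => by
        simp only [hdm]
        rw [show m x = 0 from hx, ENNReal.ofReal_zero]
    have hz' : Set.EqOn dm (fun _ => (0:ℝ≥0∞)) {x | m x = 0} := fun x hx => by
      simp only [hdm]
      rw [show m x = 0 from hx, ENNReal.ofReal_zero]
    rw [setLIntegral_congr_fun hm0set hz', lintegral_zero]
  have haem : ∀ᵐ x ∂μmix, 0 < m x := by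
    refine ae_iff.2 (measure_mono_null ?_ hm0)
    intro x hx
    exact le_antisymm (not_lt.1 hx) (hmNonneg x)
  have hφmMeas : Measurable fun x => if m x = 0 then (⊤:ℝ≥0∞) else ENNReal.ofReal (-Real.log (m x)) :=
    Measurable.ite hm0set measurable_const
      ((Real.measurable_log.comp hmMeas).neg.ennreal_ofReal)
  have hφfMeas : Measurable fun x => if f x = 0 then (⊤:ℝ≥0∞) else ENNReal.ofReal (-Real.log (f x)) :=
    Measurable.ite (hfMeas (measurableSet_singleton 0)) measurable_const
      ((Real.measurable_log.comp hfMeas).neg.ennreal_ofReal)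
  have hψmMeas : Measurable fun x => ENNReal.ofReal (Real.log (m x)) :=
    (Real.measurable_log.comp hmMeas).ennreal_ofReal
  have hψfMeas : Measurable fun x => ENNReal.ofReal (Real.log (f x)) :=
    (Real.measurable_log.comp hfMeas).ennreal_ofReal
  have hratioMeas : Measurable fun x => ENNReal.ofReal (f x / m x) :=
    (hfMeas.div hmMeas).ennreal_ofReal
  have hfm_le : ∫⁻ x, ENNReal.ofReal (f x / m x) ∂μmix ≤ 1 := by
    rw [hμmix, lintegral_withDensity_eq_lintegral_mul ν hdmMeas hratioMeas]
    calc ∫⁻ x, (dm * fun x => ENNReal.ofReal (f x / m x)) x ∂ν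
        ≤ ∫⁻ x, ENNReal.ofReal (f x) ∂ν := by
          refine lintegral_mono fun x => ?_
          show dm x * ENNReal.ofReal (f x / m x) ≤ ENNReal.ofReal (f x)
          simp only [hdm]
          rw [← ENNReal.ofReal_mul (hmNonneg x)]
          apply ENNReal.ofReal_le_ofReal
          rcases eq_or_ne (m x) 0 with h | h
          · rw [h]; simp [hfNonneg x]
          · rw [mul_comm, div_mul_cancel₀ _ h]
      _ = 1 := hfDens
  simp only [negLogIntegral]
  rw [aux_sum_mul_sub Finset.univ lam hNonneg, aux_sum_mul_sub Finset.univ lam hNonneg,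
    hdec _ hφmMeas, hdec _ hψmMeas, hdec _ hφfMeas, hdec _ hψfMeas]
  set Am := ∫⁻ x, (if m x = 0 then (⊤:ℝ≥0∞) else ENNReal.ofReal (-Real.log (m x))) ∂μmix with hAm
  set Bm := ∫⁻ x, ENNReal.ofReal (Real.log (m x)) ∂μmix with hBm
  set Af := ∫⁻ x, (if f x = 0 then (⊤:ℝ≥0∞) else ENNReal.ofReal (-Real.log (f x))) ∂μmix with hAf
  set Bf := ∫⁻ x, ENNReal.ofReal (Real.log (f x)) ∂μmix with hBf
  have hkey : Am + Bf ≤ Af + Bm := by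
    have hPt : ∀ᵐ x ∂μmix,
        (if m x = 0 then (⊤:ℝ≥0∞) else ENNReal.ofReal (-Real.log (m x)))
            + ENNReal.ofReal (Real.log (f x)) + 1
          ≤ (if f x = 0 then (⊤:ℝ≥0∞) else ENNReal.ofReal (-Real.log (f x)))
            + ENNReal.ofReal (Real.log (m x)) + ENNReal.ofReal (f x / m x) :=
      haem.mono fun x hx => aux_pointwise (f x) (m x) (hfNonneg x) hx
    have h1 : ∫⁻ x, ((if m x = 0 then (⊤:ℝ≥0∞) else ENNReal.ofReal (-Real.log (m x)))
            + ENNReal.ofReal (Real.log (f x))) ∂μmix + 1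
        ≤ ∫⁻ x, ((if f x = 0 then (⊤:ℝ≥0∞) else ENNReal.ofReal (-Real.log (f x)))
            + ENNReal.ofReal (Real.log (m x))) ∂μmix + 1 := by
      calc ∫⁻ x, ((if m x = 0 then (⊤:ℝ≥0∞) else ENNReal.ofReal (-Real.log (m x)))
            + ENNReal.ofReal (Real.log (f x))) ∂μmix + 1
          = ∫⁻ x, ((if m x = 0 then (⊤:ℝ≥0∞) else ENNReal.ofReal (-Real.log (m x)))
            + ENNReal.ofReal (Real.log (f x)) + 1) ∂μmix := by
            rw [lintegral_add_right _ measurable_const, lintegral_const, hμmix_univ, mul_one]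
        _ ≤ ∫⁻ x, ((if f x = 0 then (⊤:ℝ≥0∞) else ENNReal.ofReal (-Real.log (f x)))
            + ENNReal.ofReal (Real.log (m x)) + ENNReal.ofReal (f x / m x)) ∂μmix :=
            lintegral_mono_ae hPt
        _ = ∫⁻ x, ((if f x = 0 then (⊤:ℝ≥0∞) else ENNReal.ofReal (-Real.log (f x)))
            + ENNReal.ofReal (Real.log (m x))) ∂μmix
              + ∫⁻ x, ENNReal.ofReal (f x / m x) ∂μmix :=
            lintegral_add_right _ hratioMeas
        _ ≤ _ := by gcongr
    have h2 := (ENNReal.add_le_add_iff_right ENNReal.one_ne_top).1 h1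
    rwa [lintegral_add_left hφmMeas, lintegral_add_left hφfMeas] at h2
  have hBfBm : Bf ≤ Bm + 1 := by
    have hPt2 : ∀ᵐ x ∂μmix, ENNReal.ofReal (Real.log (f x))
        ≤ ENNReal.ofReal (Real.log (m x)) + ENNReal.ofReal (f x / m x) :=
      haem.mono fun x hx => aux_log_le (f x) (m x) (hfNonneg x) hx
    calc Bf ≤ ∫⁻ x, (ENNReal.ofReal (Real.log (m x)) + ENNReal.ofReal (f x / m x)) ∂μmix :=
          lintegral_mono_ae hPt2
      _ = Bm + ∫⁻ x, ENNReal.ofReal (f x / m x) ∂μmix := lintegral_add_left hψmMeas _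
      _ ≤ Bm + 1 := by gcongr
  clear_value Am Bm Af Bf
  by_cases hBmT : Bm = ⊤
  · rw [hBmT, EReal.coe_ennreal_top, sub_eq_add_neg, EReal.neg_top, EReal.add_bot]
    exact bot_le
  · have hBfT : Bf ≠ ⊤ := by
      intro h
      rw [h] at hBfBm
      rcases ENNReal.add_eq_top.1 (top_le_iff.1 hBfBm) with h' | h'
      · exact hBmT h'
      · exact ENNReal.one_ne_top h'
    by_cases hAfT : Af = ⊤
    · lift Bf to NNReal using hBfT
      rw [hAfT, EReal.coe_ennreal_top, EReal.coe_nnreal_eq_coe_real, EReal.top_sub_coe]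
      exact le_top
    · have hAmT : Am ≠ ⊤ := by
        intro h
        rw [h, top_add] at hkey
        rcases ENNReal.add_eq_top.1 (top_le_iff.1 hkey) with h' | h'
        · exact hAfT h'
        · exact hBmT h'
      lift Am to NNReal using hAmT
      lift Af to NNReal using hAfT
      lift Bm to NNReal using hBmT
      lift Bf to NNReal using hBfT
      rw [EReal.coe_nnreal_eq_coe_real, EReal.coe_nnreal_eq_coe_real,
        EReal.coe_nnreal_eq_coe_real, EReal.coe_nnreal_eq_coe_real,
        ← EReal.coe_sub, ← EReal.coe_sub, EReal.coe_le_coe_iff]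
      have h3 : (Am:ℝ) + Bf ≤ Af + Bm := by exact_mod_cast hkey
      linarith
end
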